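/- arXiv:2604.12433 — 12 statements merged into one kernel-verified Lean document; each statement's English description precedes it below -/
import Mathlib

section
/- Let M be an n×n matrix over a field, with rows and columns indexed by a finite set V, and let A ⊆ V. Then rank(M + I_A) − corank(M[A]) ≥ 0, where I_A is the diagonal 0/1 matrix with 1's exactly at positions in A, M[A] is the principal submatrix of M on A, and corank(M[A]) = |A| − rank(M[A]). -/
open Matrix

/-- Principal submatrix of `M` on the index set `A`. -/
def psub {V F : Type*} [Fintype V] [DecidableEq V] [Field F]
    (M : Matrix V V F) (A : Finset V) : Matrix A A F :=
  M.submatrix (fun a => a.1) (fun a => a.1)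

/-- Diagonal 0/1 matrix with 1's exactly at positions in `A`. -/
def indDiag {V F : Type*} [Fintype V] [DecidableEq V] [Field F]
    (A : Finset V) : Matrix V V F :=
  Matrix.diagonal (fun v => if v ∈ A then (1 : F) else 0)

lemma matrix_rank_add_le {m F : Type*} [Fintype m] [Field F]
    (X Y : Matrix m m F) : (X + Y).rank ≤ X.rank + Y.rank := by
  classical
  rw [Matrix.rank, Matrix.rank, Matrix.rank, Matrix.mulVecLin_add]
  have h : LinearMap.range (X.mulVecLin + Y.mulVecLin) ≤
      LinearMap.range X.mulVecLin ⊔ LinearMap.range Y.mulVecLin := by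
    rintro _ ⟨v, rfl⟩
    exact Submodule.add_mem_sup ⟨v, rfl⟩ ⟨v, rfl⟩
  exact le_trans (Submodule.finrank_mono h)
    (Submodule.finrank_add_le_finrank_add_finrank _ _)

lemma rank_psub_le {V F : Type*} [Fintype V] [DecidableEq V] [Field F]
    (N : Matrix V V F) (A : Finset V) : (psub N A).rank ≤ N.rank := by
  classical
  let Q : Matrix A V F := fun a v => if (a : V) = v then 1 else 0
  let P : Matrix V A F := fun v a => if v = (a : V) then 1 else 0
  have h : psub N A = Q * N * P := by
    ext a b
    simp only [Matrix.mul_apply]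
    simp [psub, Q, P, Matrix.mul_apply, ite_mul, mul_ite, one_mul, zero_mul,
      mul_one, mul_zero, Finset.sum_ite_eq, Finset.sum_ite_eq']
  rw [h]
  exact le_trans (Matrix.rank_mul_le_left (Q * N) P)
    (Matrix.rank_mul_le_right Q N)

theorem rank_add_indicator_sub_corank_nonneg
    {V F : Type*} [Fintype V] [DecidableEq V] [Field F]
    (M : Matrix V V F) (A : Finset V) :
    (0 : ℤ) ≤ ((M + indDiag A).rank : ℤ) - ((A.card : ℤ) - ((psub M A).rank : ℤ)) := by
  classical
  have hsub : psub (M + indDiag A) A = psub M A + 1 := by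
    ext a b
    simp only [psub, indDiag, Matrix.add_apply, Matrix.submatrix_apply, Matrix.one_apply,
      Matrix.diagonal_apply]
    by_cases h : a = b
    · subst h; simp [a.2]
    · have : (a : V) ≠ (b : V) := fun hh => h (Subtype.ext hh)
      simp [h, this]
  -- card A = rank 1 ≤ rank (psub M A + 1) + rank (psub M A)
  have key : (A.card : ℕ) ≤ (psub M A + 1).rank + (psub M A).rank := by
    have h1 : (1 : Matrix A A F).rank = A.card := by
      rw [Matrix.rank_one, Fintype.card_coe]
    have heq : (1 : Matrix A A F) = (psub M A + 1) + (-(psub M A)) := by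
      rw [add_comm (psub M A) 1, add_assoc, add_neg_cancel, add_zero]
    calc (A.card : ℕ) = (1 : Matrix A A F).rank := h1.symm
      _ = ((psub M A + 1) + (-(psub M A))).rank := by rw [← heq]
      _ ≤ (psub M A + 1).rank + (-(psub M A)).rank := matrix_rank_add_le _ _
      _ = (psub M A + 1).rank + (psub M A).rank := by
          congr 1
          have hneg : (-(psub M A)).mulVecLin = -(psub M A).mulVecLin := by
            ext v i; simp [Matrix.mulVecLin, Matrix.neg_mulVec]
          rw [Matrix.rank, Matrix.rank, hneg, LinearMap.range_neg]
  have h2 : (psub M A + 1).rank ≤ (M + indDiag A).rank := by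
    rw [← hsub]; exact rank_psub_le _ _
  have := le_trans key (Nat.add_le_add_right h2 _)
  omega
end

section
/- Let M be a square matrix over a field with index set V, and let A ⊆ V. Then rank(M) − corank((M + I_A)[A]) ≥ 0, where (M + I_A)[A] is the principal submatrix of M + I_A on A and corank means |A| minus rank. -/
open Matrix Polynomial

lemma psub_add_indDiag {V F : Type*} [Fintype V] [DecidableEq V] [Field F]
    (M : Matrix V V F) (A : Finset V) :
    psub (M + indDiag A) A = psub M A + 1 := by
  ext a b
  simp only [psub, indDiag, Matrix.submatrix_apply, Matrix.add_apply,
    Matrix.diagonal_apply, Matrix.one_apply]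
  by_cases h : a = b
  · subst h; simp [a.2]
  · have h' : (a : V) ≠ (b : V) := fun hh => h (Subtype.ext hh)
    simp [h, h']

lemma key_finrank_ker_le {V F : Type*} [Fintype V] [DecidableEq V] [Field F]
    (M : Matrix V V F) (A : Finset V) :
    Module.finrank F (LinearMap.ker (psub (M + indDiag A) A).mulVecLin) ≤ M.rank := by
  classical
  set N := psub (M + indDiag A) A with hN
  let ext0 : (A → F) →ₗ[F] (V → F) :=
    { toFun := fun x v => if h : v ∈ A then x ⟨v, h⟩ else 0
      map_add' := by intro x y; funext v; by_cases h : v ∈ A <;> simp [h]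
      map_smul' := by intro c x; funext v; by_cases h : v ∈ A <;> simp [h] }
  let φ : (LinearMap.ker N.mulVecLin) →ₗ[F] (V → F) :=
    M.mulVecLin.comp (ext0.comp (LinearMap.ker N.mulVecLin).subtype)
  have hφval : ∀ x : LinearMap.ker N.mulVecLin, ∀ a : A, φ x a.1 = - x.1 a := by
    intro x a
    have hxa : (psub M A).mulVec x.1 a + x.1 a = 0 := by
      have h0 : (psub M A + 1).mulVec x.1 = 0 := by
        rw [← psub_add_indDiag]; exact x.2
      have := congrFun h0 a
      simpa [Matrix.add_mulVec, Matrix.one_mulVec] using this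
    have hcalc : φ x a.1 = ∑ b : A, M a.1 b.1 * x.1 b := by
      show M.mulVec (ext0 x.1) a.1 = _
      rw [Matrix.mulVec, dotProduct]
      rw [← Finset.sum_subset (Finset.subset_univ A)
        (by intro v _ hv; simp [ext0, hv])]
      simp only [ext0, LinearMap.coe_mk, AddHom.coe_mk]
      rw [Finset.univ_eq_attach, ← Finset.sum_attach A
        (fun v => M a.1 v * (if h : v ∈ A then x.1 ⟨v, h⟩ else 0))]
      apply Finset.sum_congr rfl
      intro b _
      simp [ext0, b.2]
    have hsub : (psub M A).mulVec x.1 a = ∑ b : A, M a.1 b.1 * x.1 b := by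
      simp [psub, Matrix.mulVec, dotProduct]
    rw [hcalc, ← hsub]
    linear_combination hxa
  have hinj : Function.Injective φ := by
    rw [← LinearMap.ker_eq_bot]
    apply LinearMap.ker_eq_bot'.mpr
    intro x hx
    apply Subtype.ext
    funext a
    have := hφval x a
    rw [hx] at this
    simpa using this.symm
  have h1 : Module.finrank F (LinearMap.ker N.mulVecLin)
      = Module.finrank F (LinearMap.range φ) :=
    (LinearEquiv.ofInjective φ hinj).finrank_eq
  have h2 : LinearMap.range φ ≤ LinearMap.range M.mulVecLin :=
    LinearMap.range_comp_le_range _ _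
  rw [h1, Matrix.rank]
  exact Submodule.finrank_mono h2

theorem rank_sub_corank_add_indicator_nonneg
    {V F : Type*} [Fintype V] [DecidableEq V] [Field F]
    (M : Matrix V V F) (A : Finset V) :
    (0 : ℤ) ≤ (M.rank : ℤ) - ((A.card : ℤ) - ((psub (M + indDiag A) A).rank : ℤ)) := by
  have h1 := key_finrank_ker_le M A
  have h2 : (psub (M + indDiag A) A).rank
      + Module.finrank F (LinearMap.ker (psub (M + indDiag A) A).mulVecLin) = A.card := by
    have h := LinearMap.finrank_range_add_finrank_ker (psub (M + indDiag A) A).mulVecLin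
    rw [Matrix.rank]
    rw [h]
    simp [Module.finrank_fintype_fun_eq_card, Fintype.card_coe]
  have h1' : (Module.finrank F (LinearMap.ker (psub (M + indDiag A) A).mulVecLin) : ℤ)
      ≤ (M.rank : ℤ) := by exact_mod_cast h1
  have h2' : ((psub (M + indDiag A) A).rank : ℤ)
      + (Module.finrank F (LinearMap.ker (psub (M + indDiag A) A).mulVecLin) : ℤ)
      = (A.card : ℤ) := by exact_mod_cast h2
  linarith
end

section
/- For any n×n matrix M over a field F, there exists a diagonal matrix D = diag(c_1, …, c_n) with each c_i ∈ {0,1} such that M + D is invertible. -/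
open Matrix

private lemma aux_det {F : Type*} [Field F] (n : ℕ) :
    ∀ M : Matrix (Fin n) (Fin n) F,
    ∃ c : Fin n → F, (∀ i, c i = 0 ∨ c i = 1) ∧ (M + diagonal c).det ≠ 0 := by
  induction n with
  | zero =>
    intro M
    exact ⟨fun i => 0, fun i => i.elim0, by simp [det_fin_zero]⟩
  | succ n ih =>
    intro M
    set e : Fin n ⊕ Fin 1 ≃ Fin (n + 1) := finSumFinEquiv with he
    set A : Matrix (Fin n ⊕ Fin 1) (Fin n ⊕ Fin 1) F := M.submatrix e e with hA
    obtain ⟨c', hc', hdet⟩ := ih A.toBlocks₁₁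
    set d : F → (Fin n ⊕ Fin 1) → F := fun t => Sum.elim c' (fun _ => t) with hd
    set u : (Fin n ⊕ Fin 1) → F := Pi.single (Sum.inr 0) 1 with hu
    set K : Matrix (Fin n ⊕ Fin 1) (Fin n ⊕ Fin 1) F :=
      updateRow (A + diagonal (d 0)) (Sum.inr 0) u with hK
    have hKdet : K.det = (A.toBlocks₁₁ + diagonal c').det := by
      have hKb : K = fromBlocks (A.toBlocks₁₁ + diagonal c') (A.toBlocks₁₂) 0 1 := by
        ext i j
        rcases i with i | i
        · rcases j with j | j
          · by_cases h : i = j <;>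
              simp [hK, updateRow_apply, fromBlocks, toBlocks₁₁, diagonal_apply, hd, h]
          · have : j = 0 := Subsingleton.elim j 0
            subst this
            simp [hK, updateRow_apply, fromBlocks, toBlocks₁₂, diagonal_apply, hd]
        · have : i = 0 := Subsingleton.elim i 0
          subst this
          rcases j with j | j
          · simp [hK, updateRow_apply, fromBlocks, hu, Pi.single_apply]
          · have : j = 0 := Subsingleton.elim j 0
            subst this
            simp [hK, updateRow_apply, fromBlocks, hu, Pi.single_apply, one_apply]
      rw [hKb, det_fromBlocks_zero₂₁]
      simp
    have key : ∀ t : F, (A + diagonal (d t)).det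
        = (A + diagonal (d 0)).det + t * (A.toBlocks₁₁ + diagonal c').det := by
      intro t
      have hrow : A + diagonal (d t)
          = updateRow (A + diagonal (d 0)) (Sum.inr 0)
              ((A + diagonal (d 0)) (Sum.inr 0) + t • u) := by
        ext i j
        rcases i with i | i
        · rw [updateRow_ne (by simp)]
          by_cases h : (Sum.inl i : Fin n ⊕ Fin 1) = j
          · subst h; simp [diagonal_apply, hd]
          · simp [diagonal_apply, h]
        · have : i = 0 := Subsingleton.elim i 0
          subst this
          rw [updateRow_self]
          rcases j with j | j
          · simp [diagonal_apply, hd, hu, Pi.single_apply]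
          · have : j = 0 := Subsingleton.elim j 0
            subst this
            simp [diagonal_apply, hd, hu, Pi.single_apply]
      rw [hrow, det_updateRow_add, det_updateRow_smul, updateRow_eq_self, ← hK, hKdet]
    obtain ⟨t, ht01, htdet⟩ :
        ∃ t : F, (t = 0 ∨ t = 1) ∧ (A + diagonal (d t)).det ≠ 0 := by
      by_cases h0 : (A + diagonal (d 0)).det ≠ 0
      · exact ⟨0, Or.inl rfl, h0⟩
      · refine ⟨1, Or.inr rfl, ?_⟩
        rw [key 1]
        push_neg at h0
        rw [h0, zero_add, one_mul]
        exact hdet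
    refine ⟨fun i => d t (e.symm i), ?_, ?_⟩
    · intro i
      show d t (e.symm i) = 0 ∨ d t (e.symm i) = 1
      rcases h : e.symm i with j | j
      · simpa [hd] using hc' j
      · simpa [hd] using ht01
    · have hsub : (M + diagonal (fun i => d t (e.symm i))).submatrix e e
          = A + diagonal (d t) := by
        ext i j
        by_cases h : i = j <;>
          simp [diagonal_apply, h, e.injective.eq_iff, hA]
      rw [← det_submatrix_equiv_self e, hsub]
      exact htdet

theorem exists_zero_one_diagonal_perturbation_isUnit
    {F : Type*} [Field F] [DecidableEq F] (n : ℕ) (M : Matrix (Fin n) (Fin n) F) :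
    ∃ c : Fin n → F, (∀ i, c i = 0 ∨ c i = 1) ∧ IsUnit (M + Matrix.diagonal c) := by
  obtain ⟨c, hc, hdet⟩ := aux_det n M
  exact ⟨c, hc, (Matrix.isUnit_iff_isUnit_det _).2 (isUnit_iff_ne_zero.2 hdet)⟩
end

section
/- Let M be a nonsingular square matrix over a field indexed by a finite set V, and let A ⊆ V. Then rank(M⁻¹ + I_A) = |V \ A| + rank(M[A] + I), where M[A] is the principal submatrix of M on A and I is the identity on A. Equivalently, rank(M) − corank((M + I_A)[A]) = rank(M⁻¹ + I_A). -/
open Matrix Polynomial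

lemma finrank_prod_submodule {F M M' : Type*} [Field F] [AddCommGroup M] [Module F M]
    [AddCommGroup M'] [Module F M'] [FiniteDimensional F M] [FiniteDimensional F M']
    (p : Submodule F M) (q : Submodule F M') :
    Module.finrank F (p.prod q) = Module.finrank F p + Module.finrank F q := by
  have e : (p.prod q) ≃ₗ[F] p × q :=
    { toFun := fun x => (⟨x.1.1, x.2.1⟩, ⟨x.1.2, x.2.2⟩)
      invFun := fun y => ⟨(y.1.1, y.2.1), ⟨y.1.2, y.2.2⟩⟩
      map_add' := fun _ _ => rfl
      map_smul' := fun _ _ => rfl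
      left_inv := fun _ => rfl
      right_inv := fun _ => rfl }
  rw [e.finrank_eq, Module.finrank_prod]

lemma mulVec_fromBlocks_diag_one {F m n : Type*} [Field F] [Fintype m] [Fintype n]
    [DecidableEq n] (D : Matrix m m F) (v : m ⊕ n → F) :
    (fromBlocks D 0 0 (1 : Matrix n n F)) *ᵥ v
      = Sum.elim (D *ᵥ (v ∘ Sum.inl)) (v ∘ Sum.inr) := by
  funext i
  cases i with
  | inl i =>
    simp [Matrix.mulVec, dotProduct, Fintype.sum_sum_type]
  | inr j =>
    simp [Matrix.mulVec, dotProduct, Fintype.sum_sum_type, Matrix.one_apply]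

lemma rank_fromBlocks_diag_one {F m n : Type*} [Field F] [Fintype m] [Fintype n]
    [DecidableEq m] [DecidableEq n] (D : Matrix m m F) :
    (fromBlocks D 0 0 (1 : Matrix n n F)).rank = D.rank + Fintype.card n := by
  classical
  set N := fromBlocks D 0 0 (1 : Matrix n n F) with hN
  let E : ((m → F) × (n → F)) ≃ₗ[F] (m ⊕ n → F) :=
    (LinearEquiv.sumArrowLequivProdArrow m n F F).symm
  have hrange : LinearMap.range N.mulVecLin
      = Submodule.map (E : ((m → F) × (n → F)) →ₗ[F] (m ⊕ n → F))
          ((LinearMap.range D.mulVecLin).prod ⊤) := by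
    ext x
    simp only [LinearMap.mem_range, Submodule.mem_map, Submodule.mem_prod,
      Submodule.mem_top, and_true]
    constructor
    · rintro ⟨v, rfl⟩
      refine ⟨(D *ᵥ (v ∘ Sum.inl), v ∘ Sum.inr), ⟨v ∘ Sum.inl, rfl⟩, ?_⟩
      simp only [Matrix.mulVecLin_apply, hN, mulVec_fromBlocks_diag_one]
      rfl
    · rintro ⟨⟨a, b⟩, ⟨w, rfl⟩, rfl⟩
      refine ⟨Sum.elim w b, ?_⟩
      simp only [Matrix.mulVecLin_apply, hN, mulVec_fromBlocks_diag_one,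
        Sum.elim_comp_inl, Sum.elim_comp_inr]
      rfl
  rw [Matrix.rank, hrange, LinearEquiv.finrank_map_eq, finrank_prod_submodule,
    finrank_top, Module.finrank_fintype_fun_eq_card, Matrix.rank]

theorem rank_inv_add_indicator
    {V F : Type*} [Fintype V] [DecidableEq V] [Field F]
    (M : Matrix V V F) (hM : IsUnit M) (A : Finset V) :
    ((M⁻¹ + indDiag A).rank = (Finset.univ \ A).card + (psub M A + 1).rank) ∧
      (M.rank : ℤ) - ((A.card : ℤ) - ((psub (M + indDiag A) A).rank : ℤ)) =
        ((M⁻¹ + indDiag A).rank : ℤ) := by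
  classical
  have hdet : IsUnit M.det := (Matrix.isUnit_iff_isUnit_det M).mp hM
  have h1 : M⁻¹ + indDiag A = M⁻¹ * (1 + M * indDiag A) := by
    rw [mul_add, mul_one, ← mul_assoc, Matrix.nonsing_inv_mul M hdet, one_mul]
  have h2 : (M⁻¹ + indDiag A).rank = (1 + M * indDiag A).rank := by
    rw [h1, Matrix.rank_mul_eq_right_of_isUnit_det _ _ (Matrix.isUnit_nonsing_inv_det M hdet)]
  let e : {x // x ∈ A} ⊕ {x // ¬ x ∈ A} ≃ V := Equiv.sumCompl (· ∈ A)
  have h3 : (1 + M * indDiag A).rank = ((1 + M * indDiag A).submatrix e e).rank :=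
    (Matrix.rank_submatrix _ e e).symm
  set D : Matrix A A F := psub M A + 1 with hD
  set C : Matrix {x // ¬ x ∈ A} {x // x ∈ A} F :=
    M.submatrix (fun b => b.1) (fun a => a.1) with hC
  have h4 : (1 + M * indDiag A).submatrix e e = fromBlocks D 0 C 1 := by
    ext i j
    cases i with
    | inl a =>
      cases j with
      | inl a' =>
        simp [hD, psub, indDiag, Matrix.one_apply, Matrix.mul_diagonal, e,
          a'.2, add_comm]
      | inr b =>
        have hne : (a : V) ≠ (b : V) := fun h => b.2 (h ▸ a.2)
        simp [indDiag, Matrix.one_apply, Matrix.mul_diagonal, e, hne, b.2]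
    | inr b =>
      cases j with
      | inl a =>
        have hne : (b : V) ≠ (a : V) := fun h => b.2 (h.symm ▸ a.2)
        simp [hC, indDiag, Matrix.one_apply, Matrix.mul_diagonal, e, hne, a.2]
      | inr b' =>
        simp [indDiag, Matrix.one_apply, Matrix.mul_diagonal, e, b'.2,
          Subtype.ext_iff]
  have h5 : (fromBlocks D 0 C (1 : Matrix {x // ¬ x ∈ A} {x // ¬ x ∈ A} F)).rank
      = (fromBlocks D 0 0 (1 : Matrix {x // ¬ x ∈ A} {x // ¬ x ∈ A} F)).rank := by
    have hfac : fromBlocks D 0 C (1 : Matrix {x // ¬ x ∈ A} {x // ¬ x ∈ A} F)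
        = fromBlocks D 0 0 1 * fromBlocks 1 0 C 1 := by
      rw [Matrix.fromBlocks_multiply]
      simp
    rw [hfac, Matrix.rank_mul_eq_left_of_isUnit_det]
    rw [Matrix.det_fromBlocks_zero₁₂]
    simp
  have hcard : Fintype.card {x // ¬ x ∈ A} = (Finset.univ \ A).card := by
    rw [Fintype.card_subtype]
    congr 1
    ext x
    simp
  have hfirst : (M⁻¹ + indDiag A).rank = (Finset.univ \ A).card + (psub M A + 1).rank := by
    rw [h2, h3, h4, h5, rank_fromBlocks_diag_one, hcard, ← hD, add_comm]
  refine ⟨hfirst, ?_⟩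
  have hps : psub (M + indDiag A) A = psub M A + 1 := by
    ext a b
    by_cases h : a = b
    · simp [psub, indDiag, Matrix.diagonal_apply, Matrix.one_apply, h, b.2]
    · have hne : (a : V) ≠ (b : V) := fun hh => h (Subtype.ext hh)
      simp [psub, indDiag, Matrix.diagonal_apply, Matrix.one_apply, h, hne]
  rw [hps, Matrix.rank_of_isUnit M hM, hfirst]
  have hsd : (Finset.univ \ A).card = Fintype.card V - A.card := by
    rw [Finset.card_sdiff_of_subset (Finset.subset_univ A), Finset.card_univ]
  have hle : A.card ≤ Fintype.card V := Finset.card_le_univ A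
  push_cast
  omega
end

section
/- Let M be a square matrix over a field indexed by a finite set V, written in block form M = [[P, Q],[R, S]] with P = M[X] for X ⊆ V nonsingular. Define the pivot M*X = [[P⁻¹, −P⁻¹Q],[RP⁻¹, S − RP⁻¹Q]]. Then for all A ⊆ V, corank(M[A]) = corank((M*X)[A Δ X]), where Δ denotes symmetric difference. -/
open Matrix

/-- The pivot `M * X` of a square matrix `M` on a subset `X` of its index set,
given by the block formula `[[P⁻¹, -P⁻¹Q],[RP⁻¹, S - RP⁻¹Q]]` with respect to
the partition `(X, V \ X)`, where `P = M[X]`. -/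
noncomputable def pivot {V F : Type*} [Fintype V] [DecidableEq V] [Field F]
    (M : Matrix V V F) (X : Finset V) : Matrix V V F :=
  let P : Matrix {x : V // x ∈ X} {x : V // x ∈ X} F :=
    M.submatrix (fun a => a.1) (fun a => a.1)
  let Q : Matrix {x : V // x ∈ X} {x : V // x ∉ X} F :=
    M.submatrix (fun a => a.1) (fun b => b.1)
  let R : Matrix {x : V // x ∉ X} {x : V // x ∈ X} F :=
    M.submatrix (fun b => b.1) (fun a => a.1)
  let S : Matrix {x : V // x ∉ X} {x : V // x ∉ X} F :=
    M.submatrix (fun b => b.1) (fun b => b.1)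
  Matrix.reindex (Equiv.sumCompl (· ∈ X)) (Equiv.sumCompl (· ∈ X))
    (Matrix.fromBlocks P⁻¹ (-(P⁻¹ * Q)) (R * P⁻¹) (S - R * P⁻¹ * Q))

section Aux

variable {V F : Type*} [Fintype V] [DecidableEq V] [Field F]

lemma sum_split (X : Finset V) (f : V → F) :
    ∑ j, f j = (∑ a : {v : V // v ∈ X}, f a.1) + ∑ b : {v : V // v ∉ X}, f b.1 := by
  rw [← Equiv.sum_comp (Equiv.sumCompl (· ∈ X)) f, Fintype.sum_sum_type]
  rfl

lemma pivot_mulVec_swap (M : Matrix V V F) (X : Finset V)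
    (hX : IsUnit (M.submatrix (fun a : {x : V // x ∈ X} => a.1)
      (fun a : {x : V // x ∈ X} => a.1)))
    (x : V → F) :
    (pivot M X).mulVec (fun j => if j ∈ X then M.mulVec x j else x j)
      = fun i => if i ∈ X then x i else M.mulVec x i := by
  classical
  set P : Matrix {v : V // v ∈ X} {v : V // v ∈ X} F :=
    M.submatrix (fun a => a.1) (fun a => a.1) with hPdef
  set Q : Matrix {v : V // v ∈ X} {v : V // v ∉ X} F :=
    M.submatrix (fun a => a.1) (fun b => b.1) with hQdef
  set R : Matrix {v : V // v ∉ X} {v : V // v ∈ X} F :=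
    M.submatrix (fun b => b.1) (fun a => a.1) with hRdef
  set S : Matrix {v : V // v ∉ X} {v : V // v ∉ X} F :=
    M.submatrix (fun b => b.1) (fun b => b.1) with hSdef
  have hPdet : IsUnit P.det := (Matrix.isUnit_iff_isUnit_det P).mp hX
  have hPinv : P⁻¹ * P = 1 := Matrix.nonsing_inv_mul P hPdet
  set x₁ : {v : V // v ∈ X} → F := fun a => x a.1 with hx₁
  set x₂ : {v : V // v ∉ X} → F := fun b => x b.1 with hx₂
  have hMv₁ : ∀ a : {v : V // v ∈ X},
      M.mulVec x a.1 = (P.mulVec x₁ + Q.mulVec x₂) a := by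
    intro a
    simpa [Matrix.mulVec, dotProduct, hPdef, hQdef, hx₁, hx₂] using
      sum_split X (fun j => M a.1 j * x j)
  have hMv₂ : ∀ b : {v : V // v ∉ X},
      M.mulVec x b.1 = (R.mulVec x₁ + S.mulVec x₂) b := by
    intro b
    simpa [Matrix.mulVec, dotProduct, hRdef, hSdef, hx₁, hx₂] using
      sum_split X (fun j => M b.1 j * x j)
  have hw : (fun j => if j ∈ X then M.mulVec x j else x j) ∘ (Equiv.sumCompl (· ∈ X))
      = Sum.elim (P.mulVec x₁ + Q.mulVec x₂) x₂ := by
    funext s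
    cases s with
    | inl a => simp [a.2, hMv₁ a]
    | inr b => simp [b.2, hx₂]
  funext i
  rw [pivot]
  rw [Matrix.reindex_apply, Matrix.submatrix_mulVec_equiv]
  simp only [← hPdef, ← hQdef, ← hRdef, ← hSdef]
  simp only [Function.comp_apply, Equiv.symm_symm, hw]
  rw [Matrix.fromBlocks_mulVec]
  by_cases h : i ∈ X
  · rw [Equiv.sumCompl_symm_apply_of_pos h]
    simp only [Sum.elim_inl, Sum.elim_inr, Sum.elim_comp_inl, Sum.elim_comp_inr,
      Matrix.mulVec_add, Matrix.mulVec_mulVec, hPinv, Matrix.one_mulVec,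
      Matrix.neg_mulVec, Pi.add_apply, Pi.neg_apply, if_pos h]
    ring
  · rw [Equiv.sumCompl_symm_apply_of_neg h]
    have : M.mulVec x i = (R.mulVec x₁ + S.mulVec x₂) ⟨i, h⟩ := hMv₂ ⟨i, h⟩
    simp only [Sum.elim_inl, Sum.elim_inr, Sum.elim_comp_inl, Sum.elim_comp_inr,
      Matrix.mulVec_add, Matrix.mulVec_mulVec, Matrix.sub_mulVec,
      Pi.add_apply, Pi.sub_apply, if_neg h, this]
    have hRP : R * P⁻¹ * P = R := by rw [Matrix.mul_assoc, hPinv, Matrix.mul_one]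
    rw [hRP]
    ring

variable {V F : Type*} [Fintype V] [DecidableEq V] [Field F]

/-- The linear map `x ↦ (if · ∈ X then M x else x)`. -/
noncomputable def swapL (M : Matrix V V F) (X : Finset V) : (V → F) →ₗ[F] (V → F) where
  toFun x := fun j => if j ∈ X then M.mulVec x j else x j
  map_add' x y := by
    funext j; by_cases h : j ∈ X <;> simp [h, Matrix.mulVec_add]
  map_smul' c x := by
    funext j; by_cases h : j ∈ X <;> simp [h, Matrix.mulVec_smul]

lemma pivot_mulVec_swapL (M : Matrix V V F) (X : Finset V)
    (hX : IsUnit (M.submatrix (fun a : {x : V // x ∈ X} => a.1)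
      (fun a : {x : V // x ∈ X} => a.1)))
    (x : V → F) :
    (pivot M X).mulVec (swapL M X x) = fun i => if i ∈ X then x i else M.mulVec x i :=
  pivot_mulVec_swap M X hX x

lemma swap_swap (M : Matrix V V F) (X : Finset V)
    (hX : IsUnit (M.submatrix (fun a : {x : V // x ∈ X} => a.1)
      (fun a : {x : V // x ∈ X} => a.1)))
    (x : V → F) : swapL (pivot M X) X (swapL M X x) = x := by
  funext j
  show (if j ∈ X then (pivot M X).mulVec (swapL M X x) j else (swapL M X x) j) = x j
  rw [pivot_mulVec_swapL M X hX x]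
  by_cases h : j ∈ X
  · simp [h]
  · simp [swapL, h]

lemma swap_bij (M : Matrix V V F) (X : Finset V)
    (hX : IsUnit (M.submatrix (fun a : {x : V // x ∈ X} => a.1)
      (fun a : {x : V // x ∈ X} => a.1))) :
    Function.Bijective (swapL M X) := by
  have hinj : Function.Injective (swapL M X) :=
    Function.LeftInverse.injective (g := swapL (pivot M X) X) (fun x => swap_swap M X hX x)
  exact ⟨hinj, LinearMap.injective_iff_surjective.mp hinj⟩

lemma swap_swap' (M : Matrix V V F) (X : Finset V)
    (hX : IsUnit (M.submatrix (fun a : {x : V // x ∈ X} => a.1)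
      (fun a : {x : V // x ∈ X} => a.1)))
    (x' : V → F) : swapL M X (swapL (pivot M X) X x') = x' := by
  obtain ⟨x, rfl⟩ := (swap_bij M X hX).2 x'
  rw [swap_swap M X hX x]

lemma mulVec_swapL_pivot (M : Matrix V V F) (X : Finset V)
    (hX : IsUnit (M.submatrix (fun a : {x : V // x ∈ X} => a.1)
      (fun a : {x : V // x ∈ X} => a.1)))
    (x' : V → F) :
    M.mulVec (swapL (pivot M X) X x')
      = fun i => if i ∈ X then x' i else (pivot M X).mulVec x' i := by
  obtain ⟨x, rfl⟩ := (swap_bij M X hX).2 x'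
  rw [swap_swap M X hX x]
  funext i
  rw [pivot_mulVec_swapL M X hX x]
  by_cases h : i ∈ X
  · simp only [if_pos h]
    show M.mulVec x i = (if i ∈ X then M.mulVec x i else x i)
    rw [if_pos h]
  · simp only [if_neg h]

/-- The subspace of vectors supported on `A` killed (on `A`) by `M`. -/
def kerSub (M : Matrix V V F) (A : Finset V) : Submodule F (V → F) where
  carrier := {x | (∀ i ∉ A, x i = 0) ∧ ∀ i ∈ A, M.mulVec x i = 0}
  add_mem' := fun {x y} hx hy =>
    ⟨fun i hi => by simp [hx.1 i hi, hy.1 i hi],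
     fun i hi => by simp [Matrix.mulVec_add, hx.2 i hi, hy.2 i hi]⟩
  zero_mem' := ⟨fun i _ => rfl, fun i _ => by simp⟩
  smul_mem' := fun c x hx =>
    ⟨fun i hi => by simp [hx.1 i hi],
     fun i hi => by simp [Matrix.mulVec_smul, hx.2 i hi]⟩

lemma mem_kerSub {M : Matrix V V F} {A : Finset V} {x : V → F} :
    x ∈ kerSub M A ↔ (∀ i ∉ A, x i = 0) ∧ ∀ i ∈ A, M.mulVec x i = 0 := Iff.rfl

lemma psub_mulVec (M : Matrix V V F) (A : Finset V) (x : V → F)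
    (hx : ∀ i ∉ A, x i = 0) (a : {v : V // v ∈ A}) :
    (psub M A).mulVec (fun b : {v : V // v ∈ A} => x b.1) a = M.mulVec x a.1 := by
  simp only [Matrix.mulVec, dotProduct, psub, Matrix.submatrix_apply]
  rw [sum_split A (fun j => M a.1 j * x j)]
  have h0 : ∀ b : {v : V // v ∉ A}, M a.1 b.1 * x b.1 = 0 := fun b => by
    rw [hx b.1 b.2, mul_zero]
  simp [h0]

noncomputable def kerEquiv (M : Matrix V V F) (A : Finset V) :
    kerSub M A ≃ₗ[F] LinearMap.ker (psub M A).mulVecLin where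
  toFun x := ⟨fun a => x.1 a.1, by
    rw [LinearMap.mem_ker, Matrix.mulVecLin_apply]
    funext a
    rw [psub_mulVec M A x.1 x.2.1 a]
    exact x.2.2 a.1 a.2⟩
  map_add' x y := rfl
  map_smul' c x := rfl
  invFun y := ⟨fun i => if h : i ∈ A then y.1 ⟨i, h⟩ else 0, by
    refine ⟨fun i hi => dif_neg hi, fun i hi => ?_⟩
    have hx : ∀ j ∉ A, (fun i => if h : i ∈ A then y.1 ⟨i, h⟩ else 0) j = 0 :=
      fun j hj => dif_neg hj
    have h1 := psub_mulVec M A _ hx ⟨i, hi⟩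
    have h2 : (fun b : {v : V // v ∈ A} =>
        if h : (b : V) ∈ A then y.1 ⟨b.1, h⟩ else 0) = y.1 := by
      funext b; rw [dif_pos b.2]
    rw [← h1, h2]
    have h3 : (psub M A).mulVec y.1 = 0 := y.2
    rw [h3]; rfl⟩
  left_inv x := by
    apply Subtype.ext
    funext i
    dsimp only
    by_cases h : i ∈ A
    · exact dif_pos h
    · rw [dif_neg h]; exact (x.2.1 i h).symm
  right_inv y := by
    apply Subtype.ext
    funext a
    exact dif_pos a.2

lemma rank_add_finrank_kerSub (M : Matrix V V F) (A : Finset V) :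
    (psub M A).rank + Module.finrank F (kerSub M A) = A.card := by
  have h1 := LinearMap.finrank_range_add_finrank_ker ((psub M A).mulVecLin)
  rw [Matrix.rank, (kerEquiv M A).finrank_eq, h1, Module.finrank_pi, Fintype.card_coe]

lemma swap_mem_kerSub (M : Matrix V V F) (X : Finset V)
    (hX : IsUnit (M.submatrix (fun a : {x : V // x ∈ X} => a.1)
      (fun a : {x : V // x ∈ X} => a.1)))
    (A : Finset V) {x : V → F} (hx : x ∈ kerSub M A) :
    swapL M X x ∈ kerSub (pivot M X) (symmDiff A X) := by
  obtain ⟨h1, h2⟩ := hx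
  constructor
  · intro i hi
    rw [Finset.mem_symmDiff] at hi
    push_neg at hi
    show (if i ∈ X then M.mulVec x i else x i) = 0
    by_cases h : i ∈ X
    · rw [if_pos h]; exact h2 i (hi.2 h)
    · rw [if_neg h]
      exact h1 i (fun hA => h (hi.1 hA))
  · intro i hi
    rw [Finset.mem_symmDiff] at hi
    show (pivot M X).mulVec (swapL M X x) i = 0
    rw [pivot_mulVec_swapL M X hX x]
    rcases hi with ⟨hA, hXi⟩ | ⟨hXi, hA⟩
    · simp only [if_neg hXi]; exact h2 i hA
    · simp only [if_pos hXi]; exact h1 i hA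

lemma swap_mem_kerSub' (M : Matrix V V F) (X : Finset V)
    (hX : IsUnit (M.submatrix (fun a : {x : V // x ∈ X} => a.1)
      (fun a : {x : V // x ∈ X} => a.1)))
    (A : Finset V) {x' : V → F} (hx : x' ∈ kerSub (pivot M X) (symmDiff A X)) :
    swapL (pivot M X) X x' ∈ kerSub M A := by
  obtain ⟨h1, h2⟩ := hx
  constructor
  · intro i hi
    show (if i ∈ X then (pivot M X).mulVec x' i else x' i) = 0
    by_cases h : i ∈ X
    · rw [if_pos h]
      exact h2 i (Finset.mem_symmDiff.mpr (Or.inr ⟨h, hi⟩))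
    · rw [if_neg h]
      exact h1 i (fun hB => by
        rcases Finset.mem_symmDiff.mp hB with ⟨hA, _⟩ | ⟨hXi, _⟩
        · exact hi hA
        · exact h hXi)
  · intro i hi
    show M.mulVec (swapL (pivot M X) X x') i = 0
    rw [mulVec_swapL_pivot M X hX x']
    by_cases h : i ∈ X
    · simp only [if_pos h]
      exact h1 i (fun hB => by
        rcases Finset.mem_symmDiff.mp hB with ⟨_, hXi⟩ | ⟨_, hA⟩
        · exact hXi h
        · exact hA hi)
    · simp only [if_neg h]
      exact h2 i (Finset.mem_symmDiff.mpr (Or.inl ⟨hi, h⟩))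

noncomputable def pivotKerEquiv (M : Matrix V V F) (X : Finset V)
    (hX : IsUnit (M.submatrix (fun a : {x : V // x ∈ X} => a.1)
      (fun a : {x : V // x ∈ X} => a.1)))
    (A : Finset V) :
    kerSub M A ≃ₗ[F] kerSub (pivot M X) (symmDiff A X) where
  toFun x := ⟨swapL M X x.1, swap_mem_kerSub M X hX A x.2⟩
  map_add' x y := Subtype.ext ((swapL M X).map_add x.1 y.1)
  map_smul' c x := Subtype.ext ((swapL M X).map_smul c x.1)
  invFun y := ⟨swapL (pivot M X) X y.1, swap_mem_kerSub' M X hX A y.2⟩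
  left_inv x := Subtype.ext (swap_swap M X hX x.1)
  right_inv y := Subtype.ext (swap_swap' M X hX y.1)

end Aux

theorem corank_pivot_symmDiff
    {V F : Type*} [Fintype V] [DecidableEq V] [Field F]
    (M : Matrix V V F) (X : Finset V)
    (hX : IsUnit (M.submatrix (fun a : {x : V // x ∈ X} => a.1)
      (fun a : {x : V // x ∈ X} => a.1)))
    (A : Finset V) :
    (A.card : ℤ) - ((psub M A).rank : ℤ) =
      ((symmDiff A X).card : ℤ) - ((psub (pivot M X) (symmDiff A X)).rank : ℤ) := by
  have h1 := rank_add_finrank_kerSub M A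
  have h2 := rank_add_finrank_kerSub (pivot M X) (symmDiff A X)
  have h3 : Module.finrank F (kerSub M A)
      = Module.finrank F (kerSub (pivot M X) (symmDiff A X)) :=
    (pivotKerEquiv M X hX A).finrank_eq
  omega
end

section
/- Let M be an invertible square matrix over a field indexed by a finite set V. Define the partial-⟨δ⟩ polynomial P_δ(M,z) = Σ_{A ⊆ V} z^{rank(M[A]) + rank(M[A^c])}. Then P_δ(M, z) = P_δ(M⁻¹, z). -/
open Matrix Polynomial

namespace PartialDeltaAux

variable {V F : Type*} [Fintype V] [DecidableEq V] [Field F]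

/-- Extension by zero. -/
def ext0Lin (A : Finset V) : (A → F) →ₗ[F] (V → F) where
  toFun x v := if h : v ∈ A then x ⟨v, h⟩ else 0
  map_add' x y := by ext v; by_cases h : v ∈ A <;> simp [h]
  map_smul' c x := by ext v; by_cases h : v ∈ A <;> simp [h]

/-- Restriction. -/
def restrLin (A : Finset V) : (V → F) →ₗ[F] (A → F) :=
  LinearMap.funLeft F F (fun a : A => (a : V))

lemma ext0Lin_apply_mem (A : Finset V) (x : A → F) {v : V} (h : v ∈ A) :
    ext0Lin (F := F) A x v = x ⟨v, h⟩ := dif_pos h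

lemma ext0Lin_apply_not_mem (A : Finset V) (x : A → F) {v : V} (h : v ∉ A) :
    ext0Lin (F := F) A x v = 0 := dif_neg h

lemma restr_ext0 (A : Finset V) (x : A → F) :
    restrLin (F := F) A (ext0Lin A x) = x := by
  ext a
  simp [restrLin, ext0Lin_apply_mem A x a.2]

lemma ext0_restr (A : Finset V) (y : V → F) (hy : ∀ v ∉ A, y v = 0) :
    ext0Lin (F := F) A (restrLin A y) = y := by
  ext v
  by_cases h : v ∈ A
  · rw [ext0Lin_apply_mem A _ h]; rfl
  · rw [ext0Lin_apply_not_mem A _ h, hy v h]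

lemma restr_mulVec_ext0 (M : Matrix V V F) (A : Finset V) (x : A → F) :
    restrLin (F := F) A (M.mulVec (ext0Lin A x)) = (psub M A).mulVec x := by
  ext a
  show ∑ v : V, M a.1 v * ext0Lin A x v = ∑ b : A, M a.1 b.1 * x b
  rw [← Finset.sum_subset A.subset_univ
      (fun v _ hv => by rw [ext0Lin_apply_not_mem A x hv, mul_zero]),
    ← Finset.sum_coe_sort A]
  exact Finset.sum_congr rfl fun b _ => by rw [ext0Lin_apply_mem A x b.2]

/-- The one-sided kernel dimension inequality. -/
lemma ker_dim_le (M : Matrix V V F) (hM : IsUnit M) (A : Finset V) :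
    Module.finrank F (LinearMap.ker (psub M A).mulVecLin) ≤
      Module.finrank F (LinearMap.ker (psub M⁻¹ (Finset.univ \ A)).mulVecLin) := by
  have hdet : IsUnit M.det := (Matrix.isUnit_iff_isUnit_det M).1 hM
  set B := Finset.univ \ A with hB
  have hmemB : ∀ v : V, v ∈ B ↔ v ∉ A := by
    intro v; simp [hB]
  -- the transfer map
  set T : (A → F) →ₗ[F] (B → F) :=
    restrLin B ∘ₗ M.mulVecLin ∘ₗ ext0Lin A with hT
  have hker : ∀ x ∈ LinearMap.ker (psub M A).mulVecLin,
      T x ∈ LinearMap.ker (psub M⁻¹ B).mulVecLin := by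
    intro x hx
    have hx' : restrLin (F := F) A (M.mulVec (ext0Lin A x)) = 0 := by
      rw [restr_mulVec_ext0]; exact hx
    set y := M.mulVec (ext0Lin A x) with hy
    have hy0 : ∀ v ∉ B, y v = 0 := by
      intro v hv
      have hvA : v ∈ A := by by_contra h; exact hv ((hmemB v).2 h)
      exact congrFun hx' ⟨v, hvA⟩
    have hTx : T x = restrLin B y := rfl
    show (psub M⁻¹ B).mulVec (T x) = 0
    rw [hTx, ← restr_mulVec_ext0, ext0_restr B y hy0, hy,
      Matrix.mulVec_mulVec, Matrix.nonsing_inv_mul M hdet, Matrix.one_mulVec]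
    ext b
    exact ext0Lin_apply_not_mem A x ((hmemB b.1).1 b.2)
  have hinj : ∀ x ∈ LinearMap.ker (psub M A).mulVecLin, T x = 0 → x = 0 := by
    intro x hx hTx
    have hx' : restrLin (F := F) A (M.mulVec (ext0Lin A x)) = 0 := by
      rw [restr_mulVec_ext0]; exact hx
    have hy : M.mulVec (ext0Lin A x) = 0 := by
      ext v
      by_cases h : v ∈ A
      · exact congrFun hx' ⟨v, h⟩
      · exact congrFun hTx ⟨v, (hmemB v).2 h⟩
    have hx0 : ext0Lin (F := F) A x = 0 := by
      have := congrArg (M⁻¹.mulVec ·) hy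
      simpa [Matrix.mulVec_mulVec, Matrix.nonsing_inv_mul M hdet,
        Matrix.one_mulVec] using this
    calc x = restrLin A (ext0Lin A x) := (restr_ext0 A x).symm
    _ = 0 := by rw [hx0]; ext a; rfl
  let Φ := T.restrict hker
  have hΦ : Function.Injective Φ := by
    rw [← LinearMap.ker_eq_bot, LinearMap.ker_eq_bot']
    intro m hm
    ext1
    exact hinj m.1 m.2 (congrArg Subtype.val hm)
  exact LinearMap.finrank_le_finrank_of_injective hΦ

lemma ker_dim_eq (M : Matrix V V F) (hM : IsUnit M) (A : Finset V) :
    Module.finrank F (LinearMap.ker (psub M A).mulVecLin) =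
      Module.finrank F (LinearMap.ker (psub M⁻¹ (Finset.univ \ A)).mulVecLin) := by
  refine le_antisymm (ker_dim_le M hM A) ?_
  have h2 := ker_dim_le M⁻¹ (Matrix.isUnit_nonsing_inv_iff.2 hM) (Finset.univ \ A)
  have hdet : IsUnit M.det := (Matrix.isUnit_iff_isUnit_det M).1 hM
  rwa [Matrix.nonsing_inv_nonsing_inv M hdet,
    Finset.sdiff_sdiff_self_left, Finset.univ_inter] at h2

lemma rank_add_ker (N : Matrix V V F) (A : Finset V) :
    (psub N A).rank + Module.finrank F (LinearMap.ker (psub N A).mulVecLin) = A.card := by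
  have := LinearMap.finrank_range_add_finrank_ker (psub N A).mulVecLin
  rw [Matrix.rank]
  rw [this]
  simp

end PartialDeltaAux

theorem partialDelta_inv_invariance
    {V F : Type*} [Fintype V] [DecidableEq V] [Field F]
    (M : Matrix V V F) (hM : IsUnit M) :
    (∑ A : Finset V, (X : Polynomial ℤ) ^
        ((psub M A).rank + (psub M (Finset.univ \ A)).rank)) =
      ∑ A : Finset V, (X : Polynomial ℤ) ^
        ((psub M⁻¹ A).rank + (psub M⁻¹ (Finset.univ \ A)).rank) := by
  refine Finset.sum_congr rfl fun A _ => ?_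
  congr 1
  have hBc : Finset.univ \ (Finset.univ \ A) = A := by
    rw [Finset.sdiff_sdiff_self_left, Finset.univ_inter]
  have h1 := PartialDeltaAux.ker_dim_eq M hM A
  have h2 := PartialDeltaAux.ker_dim_eq M hM (Finset.univ \ A)
  rw [hBc] at h2
  have rMA := PartialDeltaAux.rank_add_ker M A
  have rMB := PartialDeltaAux.rank_add_ker M (Finset.univ \ A)
  have rNA := PartialDeltaAux.rank_add_ker M⁻¹ A
  have rNB := PartialDeltaAux.rank_add_ker M⁻¹ (Finset.univ \ A)
  omega
end

section
/- Let M be a nonsingular square matrix over a field indexed by finite set V. Define P_{δτ}(M,z) = Σ_{A⊆V} z^{rank((M+I_A)[A]) + rank(M[A^c])} and P_{τδ}(N,z) = Σ_{A⊆V} z^{rank(N+I_A) − corank(N[A])}. Then P_{δτ}(M, z) = P_{τδ}(M⁻¹, z). -/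
open Matrix Polynomial

section Aux

variable {V F : Type*} [Fintype V] [DecidableEq V] [Field F]

/-- Extension by zero, as a linear map. -/
def extz (A : Finset V) : (A → F) →ₗ[F] (V → F) where
  toFun x := fun v => if h : v ∈ A then x ⟨v, h⟩ else 0
  map_add' x y := by ext v; by_cases h : v ∈ A <;> simp [h]
  map_smul' c x := by ext v; by_cases h : v ∈ A <;> simp [h]

lemma extz_apply_mem (A : Finset V) (x : A → F) (v : V) (h : v ∈ A) :
    extz A x v = x ⟨v, h⟩ := by simp [extz, h]

lemma extz_apply_not_mem (A : Finset V) (x : A → F) (v : V) (h : v ∉ A) :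
    extz A x v = 0 := by simp [extz, h]

lemma psub_mulVec_s12 (M : Matrix V V F) (A : Finset V) (x : A → F) (a : A) :
    (psub M A *ᵥ x) a = (M *ᵥ extz A x) a.1 := by
  have hL : (psub M A *ᵥ x) a = ∑ b ∈ A.attach, M a.1 b.1 * x b := by
    simp [psub, mulVec, dotProduct, Finset.univ_eq_attach, submatrix]
  have hR : (M *ᵥ extz A x) a.1 = ∑ v ∈ A, M a.1 v * extz A x v := by
    rw [mulVec, dotProduct]
    refine (Finset.sum_subset (Finset.subset_univ A) fun v _ hv => ?_).symm
    rw [extz_apply_not_mem A x v hv, mul_zero]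
  rw [hL, hR, ← Finset.sum_attach A (fun v => M a.1 v * extz A x v)]
  refine Finset.sum_congr rfl fun b _ => ?_
  rw [extz_apply_mem A x b.1 b.2]

lemma indDiag_mulVec (A : Finset V) (v : V → F) (u : V) :
    (indDiag A *ᵥ v) u = if u ∈ A then v u else 0 := by
  rw [indDiag, mulVec_diagonal]
  by_cases h : u ∈ A <;> simp [h]

lemma extz_restr (A : Finset V) (v : V → F) (hv : ∀ u, u ∉ A → v u = 0) :
    extz A (fun a : A => v a.1) = v := by
  ext u
  by_cases h : u ∈ A
  · rw [extz_apply_mem A _ u h]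
  · rw [extz_apply_not_mem A _ u h, hv u h]

lemma extz_indDiag (A : Finset V) (v : V → F) :
    extz A (fun a : A => v a.1) = indDiag A *ᵥ v := by
  ext u
  rw [indDiag_mulVec]
  by_cases h : u ∈ A
  · rw [extz_apply_mem A _ u h, if_pos h]
  · rw [extz_apply_not_mem A _ u h, if_neg h]

/-- Restriction to `A`, as a linear map. -/
def restr (A : Finset V) : (V → F) →ₗ[F] (A → F) :=
  LinearMap.funLeft F F (fun a : A => (a.1 : V))

lemma restr_apply (A : Finset V) (v : V → F) (a : A) : restr A v a = v a.1 := rfl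

lemma extz_restr_eq (A : Finset V) (v : V → F) :
    extz A (restr A v) = indDiag A *ᵥ v := extz_indDiag A v

/-- The transfer map in the nullity theorem. -/
def trmap (M : Matrix V V F) (A B : Finset V) : (B → F) →ₗ[F] (A → F) :=
  restr A ∘ₗ M.mulVecLin ∘ₗ extz B

lemma trmap_apply (M : Matrix V V F) (A B : Finset V) (x : B → F) (a : A) :
    trmap M A B x a = (M *ᵥ extz B x) a.1 := rfl

lemma extz_trmap (M : Matrix V V F) (A B : Finset V)
    (hAB : ∀ u : V, u ∈ B ↔ u ∉ A) (x : B → F)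
    (hx : (psub M B).mulVecLin x = 0) :
    extz A (trmap M A B x) = M *ᵥ extz B x := by
  refine extz_restr A (M *ᵥ extz B x) fun u hu => ?_
  have hB : u ∈ B := (hAB u).mpr hu
  have := congrFun hx ⟨u, hB⟩
  rw [mulVecLin_apply, Pi.zero_apply, psub_mulVec_s12] at this
  exact this

lemma trmap_mem_ker (M : Matrix V V F) (hM : IsUnit M) (A B : Finset V)
    (hAB : ∀ u : V, u ∈ B ↔ u ∉ A) (x : B → F)
    (hx : (psub M B).mulVecLin x = 0) :
    (psub M⁻¹ A).mulVecLin (trmap M A B x) = 0 := by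
  have hinv : M⁻¹ * M = 1 := nonsing_inv_mul M ((isUnit_iff_isUnit_det M).mp hM)
  ext a
  rw [mulVecLin_apply, psub_mulVec_s12, Pi.zero_apply, extz_trmap M A B hAB x hx,
    mulVec_mulVec, hinv, one_mulVec]
  exact extz_apply_not_mem B x a.1 (fun h => ((hAB a.1).mp h) a.2)

lemma trmap_trmap (M : Matrix V V F) (hM : IsUnit M) (A B : Finset V)
    (hAB : ∀ u : V, u ∈ B ↔ u ∉ A) (x : B → F)
    (hx : (psub M B).mulVecLin x = 0) :
    trmap M⁻¹ B A (trmap M A B x) = x := by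
  have hinv : M⁻¹ * M = 1 := nonsing_inv_mul M ((isUnit_iff_isUnit_det M).mp hM)
  ext b
  rw [trmap_apply, extz_trmap M A B hAB x hx, mulVec_mulVec, hinv, one_mulVec,
    extz_apply_mem B x b.1 b.2]

/-- The nullity theorem as a linear equivalence of kernels. -/
noncomputable def nullityEquiv (M : Matrix V V F) (hM : IsUnit M) (A B : Finset V)
    (hAB : ∀ u : V, u ∈ B ↔ u ∉ A) :
    LinearMap.ker (psub M B).mulVecLin ≃ₗ[F] LinearMap.ker (psub M⁻¹ A).mulVecLin := by
  have hdet : IsUnit M.det := (isUnit_iff_isUnit_det M).mp hM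
  have hM' : IsUnit M⁻¹ := isUnit_nonsing_inv_iff.mpr hM
  have hBA : ∀ u : V, u ∈ A ↔ u ∉ B := fun u => by
    by_cases h : u ∈ A <;> simp [h, hAB u]
  have hMM : M⁻¹⁻¹ = M := nonsing_inv_nonsing_inv M hdet
  refine LinearEquiv.ofLinear
    ((trmap M A B).restrict fun x hx => ?_)
    ((trmap M⁻¹ B A).restrict fun y hy => ?_) ?_ ?_
  · exact trmap_mem_ker M hM A B hAB x (LinearMap.mem_ker.mp hx)
  · have := trmap_mem_ker M⁻¹ hM' B A hBA y (LinearMap.mem_ker.mp hy)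
    rwa [hMM] at this
  · ext y
    have hy := (LinearMap.mem_ker.mp y.2)
    have := trmap_trmap M⁻¹ hM' B A hBA y.1 hy
    rw [hMM] at this
    exact congrFun this _
  · ext x
    have hx := (LinearMap.mem_ker.mp x.2)
    exact congrFun (trmap_trmap M hM A B hAB x.1 hx) _

lemma rank_add_nullity (n : Type*) [Fintype n] [DecidableEq n] (N : Matrix n n F) :
    N.rank + Module.finrank F (LinearMap.ker N.mulVecLin) = Fintype.card n := by
  have := LinearMap.finrank_range_add_finrank_ker N.mulVecLin
  rwa [Module.finrank_pi F] at this

/-- Additive form of the nullity theorem. -/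
lemma nullity_rank (M : Matrix V V F) (hM : IsUnit M) (A B : Finset V)
    (hAB : ∀ u : V, u ∈ B ↔ u ∉ A) :
    (psub M B).rank + A.card = (psub M⁻¹ A).rank + B.card := by
  have h1 := rank_add_nullity (B : Type _) (psub M B)
  have h2 := rank_add_nullity (A : Type _) (psub M⁻¹ A)
  have h3 : Module.finrank F (LinearMap.ker (psub M B).mulVecLin) =
      Module.finrank F (LinearMap.ker (psub M⁻¹ A).mulVecLin) :=
    (nullityEquiv M hM A B hAB).finrank_eq
  rw [Fintype.card_coe] at h1 h2
  omega

/-- The map `x ↦ -(M *ᵥ extz A x)`. -/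
def dtmap (M : Matrix V V F) (A : Finset V) : (A → F) →ₗ[F] (V → F) :=
  -(M.mulVecLin ∘ₗ extz A)

lemma dtmap_apply (M : Matrix V V F) (A : Finset V) (x : A → F) :
    dtmap M A x = -(M *ᵥ extz A x) := rfl

lemma dt_ker_cond (M : Matrix V V F) (A : Finset V) (x : A → F)
    (hx : (psub (M + indDiag A) A).mulVecLin x = 0) (u : V) (hu : u ∈ A) :
    (M *ᵥ extz A x) u = -x ⟨u, hu⟩ := by
  have := congrFun hx ⟨u, hu⟩
  rw [mulVecLin_apply, Pi.zero_apply, psub_mulVec_s12, add_mulVec, Pi.add_apply,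
    indDiag_mulVec, if_pos hu, extz_apply_mem A x u hu] at this
  linear_combination this

lemma dtmap_mem_ker (M : Matrix V V F) (hM : IsUnit M) (A : Finset V) (x : A → F)
    (hx : (psub (M + indDiag A) A).mulVecLin x = 0) :
    (M⁻¹ + indDiag A).mulVecLin (dtmap M A x) = 0 := by
  have hinv : M⁻¹ * M = 1 := nonsing_inv_mul M ((isUnit_iff_isUnit_det M).mp hM)
  ext u
  rw [mulVecLin_apply, Pi.zero_apply, dtmap_apply, add_mulVec, Pi.add_apply,
    mulVec_neg, mulVec_mulVec, hinv, one_mulVec, mulVec_neg, Pi.neg_apply,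
    Pi.neg_apply, indDiag_mulVec]
  by_cases hu : u ∈ A
  · rw [if_pos hu, extz_apply_mem A x u hu, dt_ker_cond M A x hx u hu]; ring
  · rw [if_neg hu, extz_apply_not_mem A x u hu]; ring

lemma restr_dtmap (M : Matrix V V F) (A : Finset V) (x : A → F)
    (hx : (psub (M + indDiag A) A).mulVecLin x = 0) :
    restr A (dtmap M A x) = x := by
  ext a
  rw [restr_apply, dtmap_apply, Pi.neg_apply, dt_ker_cond M A x hx a.1 a.2, neg_neg]

lemma indDiag_eq_neg_inv (M : Matrix V V F) (A : Finset V) (v : V → F)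
    (hv : (M⁻¹ + indDiag A).mulVecLin v = 0) :
    indDiag A *ᵥ v = -(M⁻¹ *ᵥ v) := by
  ext u
  have := congrFun hv u
  rw [mulVecLin_apply, Pi.zero_apply, add_mulVec, Pi.add_apply] at this
  rw [Pi.neg_apply]; linear_combination this

lemma dtmap_restr (M : Matrix V V F) (hM : IsUnit M) (A : Finset V) (v : V → F)
    (hv : (M⁻¹ + indDiag A).mulVecLin v = 0) :
    dtmap M A (restr A v) = v := by
  have hinv : M * M⁻¹ = 1 := mul_nonsing_inv M ((isUnit_iff_isUnit_det M).mp hM)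
  have hre : extz A (restr A v) = indDiag A *ᵥ v := extz_restr_eq A v
  rw [dtmap_apply, extz_restr_eq A v, indDiag_eq_neg_inv M A v hv, mulVec_neg, neg_neg,
    mulVec_mulVec, hinv, one_mulVec]

lemma restr_mem_ker (M : Matrix V V F) (hM : IsUnit M) (A : Finset V) (v : V → F)
    (hv : (M⁻¹ + indDiag A).mulVecLin v = 0) :
    (psub (M + indDiag A) A).mulVecLin (restr A v) = 0 := by
  have hinv : M * M⁻¹ = 1 := mul_nonsing_inv M ((isUnit_iff_isUnit_det M).mp hM)
  ext a
  rw [mulVecLin_apply, Pi.zero_apply, psub_mulVec_s12, extz_restr_eq A v, add_mulVec,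
    Pi.add_apply]
  have h1 : (M *ᵥ indDiag A *ᵥ v) a.1 = -v a.1 := by
    rw [indDiag_eq_neg_inv M A v hv, mulVec_neg, mulVec_mulVec, hinv, one_mulVec,
      Pi.neg_apply]
  have h2 : (indDiag A *ᵥ indDiag A *ᵥ v) a.1 = v a.1 := by
    rw [indDiag_mulVec, if_pos a.2, indDiag_mulVec, if_pos a.2]
  rw [h1, h2]; ring

/-- The delta-tau kernel equivalence. -/
noncomputable def dtEquiv (M : Matrix V V F) (hM : IsUnit M) (A : Finset V) :
    LinearMap.ker (psub (M + indDiag A) A).mulVecLin ≃ₗ[F]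
      LinearMap.ker (M⁻¹ + indDiag A).mulVecLin := by
  refine LinearEquiv.ofLinear
    ((dtmap M A).restrict fun x hx => ?_)
    ((restr A).restrict fun v hv => ?_) ?_ ?_
  · exact dtmap_mem_ker M hM A x (LinearMap.mem_ker.mp hx)
  · exact restr_mem_ker M hM A v (LinearMap.mem_ker.mp hv)
  · ext v
    exact
      congrFun (dtmap_restr M hM A v.1 (LinearMap.mem_ker.mp v.2)) _
  · ext x
    exact
      congrFun (restr_dtmap M A x.1 (LinearMap.mem_ker.mp x.2)) _

lemma rank_inv_add (M : Matrix V V F) (hM : IsUnit M) (A : Finset V) :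
    (M⁻¹ + indDiag A).rank + A.card =
      (psub (M + indDiag A) A).rank + Fintype.card V := by
  have h1 := rank_add_nullity (A : Type _) (psub (M + indDiag A) A)
  have h2 := rank_add_nullity V (M⁻¹ + indDiag A)
  have h3 := (dtEquiv M hM A).finrank_eq
  rw [Fintype.card_coe] at h1
  omega

end Aux

theorem partialDeltaTau_eq_partialTauDelta_inv
    {V F : Type*} [Fintype V] [DecidableEq V] [Field F]
    (M : Matrix V V F) (hM : IsUnit M) :
    (∑ A : Finset V, (X : Polynomial ℤ) ^
        ((psub (M + indDiag A) A).rank + (psub M (Finset.univ \ A)).rank)) =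
      ∑ A : Finset V, (X : Polynomial ℤ) ^
        ((M⁻¹ + indDiag A).rank - (A.card - (psub M⁻¹ A).rank)) := by
  refine Finset.sum_congr rfl fun A _ => ?_
  congr 1
  have h1 := nullity_rank M hM A (Finset.univ \ A)
    (fun u => by simp [Finset.mem_sdiff])
  have h2 := rank_inv_add M hM A
  have h3 : (Finset.univ \ A).card = Fintype.card V - A.card := by
    rw [Finset.card_sdiff_of_subset (Finset.subset_univ A), Finset.card_univ]
  have h4 : A.card ≤ Fintype.card V := Finset.card_le_univ A
  have h5 : (psub M⁻¹ A).rank ≤ A.card := by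
    simpa [Fintype.card_coe] using (psub M⁻¹ A).rank_le_card_width
  omega
end

section
/- Let M be a square matrix over a field indexed by V = V₁ ⊔ V₂ that is block-diagonal with respect to this partition. Then P_τ(M,z) = P_τ(M[V₁],z) · P_τ(M[V₂],z), where P_τ(N,z) = Σ_{A} z^{rank(N + I_A)} summed over all subsets A of the index set of N. -/
open Matrix Polynomial

/-- The partial-⟨τ⟩ polynomial of a square matrix. -/
noncomputable def partialTau {V F : Type*} [Fintype V] [DecidableEq V] [Field F]
    (M : Matrix V V F) : Polynomial ℤ :=
  ∑ A : Finset V, (X : Polynomial ℤ) ^ (M + indDiag A).rank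

open Module

lemma range_prodMap_aux {R M M₂ M₃ M₄ : Type*} [CommRing R]
    [AddCommGroup M] [AddCommGroup M₂] [AddCommGroup M₃] [AddCommGroup M₄]
    [Module R M] [Module R M₂] [Module R M₃] [Module R M₄]
    (f : M →ₗ[R] M₂) (g : M₃ →ₗ[R] M₄) :
    LinearMap.range (f.prodMap g) = (LinearMap.range f).prod (LinearMap.range g) := by
  ext ⟨x, y⟩
  constructor
  · rintro ⟨⟨a, b⟩, h⟩
    simp only [LinearMap.prodMap_apply, Prod.mk.injEq] at h
    exact ⟨⟨a, h.1⟩, ⟨b, h.2⟩⟩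
  · rintro ⟨⟨a, ha⟩, ⟨b, hb⟩⟩
    exact ⟨(a, b), by simp [ha, hb]⟩

/-- The obvious linear equivalence between `p.prod q` and `p × q`. -/
def prodSubmoduleEquiv {R M N : Type*} [CommRing R] [AddCommGroup M] [AddCommGroup N]
    [Module R M] [Module R N] (p : Submodule R M) (q : Submodule R N) :
    (p.prod q) ≃ₗ[R] p × q where
  toFun x := (⟨(x : M × N).1, x.2.1⟩, ⟨(x : M × N).2, x.2.2⟩)
  map_add' _ _ := rfl
  map_smul' _ _ := rfl
  invFun x := ⟨((x.1 : M), (x.2 : N)), x.1.2, x.2.2⟩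
  left_inv _ := rfl
  right_inv _ := rfl

lemma finrank_submodule_prod {F M N : Type*} [Field F] [AddCommGroup M] [AddCommGroup N]
    [Module F M] [Module F N] [FiniteDimensional F M] [FiniteDimensional F N]
    (p : Submodule F M) (q : Submodule F N) :
    finrank F (p.prod q) = finrank F p + finrank F q := by
  rw [← Module.finrank_prod]
  exact LinearEquiv.finrank_eq (prodSubmoduleEquiv p q)

lemma rank_fromBlocks_diag {V₁ V₂ F : Type*} [Fintype V₁] [Fintype V₂] [Field F]
    (B : Matrix V₁ V₁ F) (C : Matrix V₂ V₂ F) :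
    (Matrix.fromBlocks B 0 0 C).rank = B.rank + C.rank := by
  classical
  let e := LinearEquiv.sumArrowLequivProdArrow V₁ V₂ F F
  have key : (Matrix.fromBlocks B 0 0 C).mulVecLin
      = e.symm.toLinearMap ∘ₗ (B.mulVecLin.prodMap C.mulVecLin) ∘ₗ e.toLinearMap := by
    apply LinearMap.ext
    intro x
    funext i
    cases i with
    | inl a =>
      have h1 : ((e x).1 : V₁ → F) = x ∘ Sum.inl := rfl
      simp [e, Matrix.fromBlocks_mulVec, h1]
    | inr b =>
      have h2 : ((e x).2 : V₂ → F) = x ∘ Sum.inr := rfl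
      simp [e, Matrix.fromBlocks_mulVec, h2]
  rw [Matrix.rank, key, LinearMap.range_comp,
    LinearMap.range_comp_of_range_eq_top _ (LinearMap.range_eq_top.2 e.surjective),
    LinearEquiv.finrank_map_eq, range_prodMap_aux, finrank_submodule_prod]
  rfl

theorem partialTau_blockDiagonal
    {V₁ V₂ F : Type*} [Fintype V₁] [DecidableEq V₁] [Fintype V₂] [DecidableEq V₂] [Field F]
    (M : Matrix (V₁ ⊕ V₂) (V₁ ⊕ V₂) F)
    (h₁₂ : ∀ (u : V₁) (v : V₂), M (Sum.inl u) (Sum.inr v) = 0)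
    (h₂₁ : ∀ (u : V₂) (v : V₁), M (Sum.inr u) (Sum.inl v) = 0) :
    partialTau M =
      partialTau (M.submatrix Sum.inl Sum.inl) * partialTau (M.submatrix Sum.inr Sum.inr) := by
  classical
  set B := M.submatrix Sum.inl Sum.inl with hB
  set C := M.submatrix Sum.inr Sum.inr with hC
  have hM : M = Matrix.fromBlocks B 0 0 C := by
    ext i j
    cases i with
    | inl i => cases j with
      | inl j => rfl
      | inr j => simpa using h₁₂ i j
    | inr i => cases j with
      | inl j => simpa using h₂₁ i j
      | inr j => rfl
  have hrank : ∀ A : Finset (V₁ ⊕ V₂),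
      (M + indDiag A).rank = (B + indDiag A.toLeft).rank + (C + indDiag A.toRight).rank := by
    intro A
    have hd : (indDiag A : Matrix (V₁ ⊕ V₂) (V₁ ⊕ V₂) F)
        = Matrix.fromBlocks (indDiag A.toLeft) 0 0 (indDiag A.toRight) := by
      have hfun : (fun v : V₁ ⊕ V₂ => if v ∈ A then (1 : F) else 0)
          = Sum.elim (fun v => if v ∈ A.toLeft then (1 : F) else 0)
              (fun v => if v ∈ A.toRight then (1 : F) else 0) := by
        funext v
        cases v <;> simp
      rw [indDiag, hfun, ← Matrix.fromBlocks_diagonal]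
      rfl
    rw [hM, hd, Matrix.fromBlocks_add]
    simp only [add_zero, zero_add]
    rw [rank_fromBlocks_diag]
  let eq : Finset V₁ × Finset V₂ ≃ Finset (V₁ ⊕ V₂) :=
    { toFun := fun p => p.1.disjSum p.2
      invFun := fun u => (u.toLeft, u.toRight)
      left_inv := fun p => by simp
      right_inv := fun u => Finset.toLeft_disjSum_toRight }
  unfold partialTau
  calc (∑ A : Finset (V₁ ⊕ V₂), (X : Polynomial ℤ) ^ (M + indDiag A).rank)
      = ∑ p : Finset V₁ × Finset V₂,
          (X : Polynomial ℤ) ^ (B + indDiag p.1).rank * X ^ (C + indDiag p.2).rank := by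
        refine (Fintype.sum_equiv eq _ _ ?_).symm
        intro p
        rw [hrank, pow_add]
        simp [eq]
    _ = _ := by
        rw [Fintype.sum_prod_type, Finset.sum_mul_sum]
end

section
/- Let M be a square matrix over a field with finite index set V. Then the partial-⟨τ⟩ polynomial P_τ(M,z) = Σ_{A⊆V} z^{rank(M+I_A)} has degree exactly |V|; that is, max over A ⊆ V of rank(M + I_A) equals |V|, and every exponent is at most |V|. -/
open Matrix Polynomial

private lemma aux_fin {F : Type*} [Field F] :
    ∀ n (M : Matrix (Fin n) (Fin n) F),
      ∃ d : Fin n → F, (∀ i, d i = 0 ∨ d i = 1) ∧ (M + Matrix.diagonal d).det ≠ 0 := by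
  intro n
  induction n with
  | zero =>
    intro M
    exact ⟨fun i => 0, fun i => Or.inl rfl, by simp [Matrix.det_fin_zero]⟩
  | succ n ih =>
    intro M
    obtain ⟨d', hd', hdet⟩ := ih (M.submatrix Fin.succ Fin.succ)
    set B : Matrix (Fin (n+1)) (Fin (n+1)) F :=
      M + Matrix.diagonal (Fin.cons 0 d') with hB
    have hsub : B.submatrix Fin.succ Fin.succ
        = M.submatrix Fin.succ Fin.succ + Matrix.diagonal d' := by
      ext i j
      by_cases h : i = j
      · subst h; simp [hB, Matrix.diagonal]
      · have : (Fin.succ i) ≠ (Fin.succ j) := fun hc => h (Fin.succ_injective _ hc)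
        simp [hB, Matrix.diagonal, h, this]
    -- the "1 in corner" matrix: det of B with row 0 replaced by `Pi.single 0 1`
    have hminor : (B.updateRow 0 (Pi.single 0 1)).det
        = (M.submatrix Fin.succ Fin.succ + Matrix.diagonal d').det := by
      rw [Matrix.det_succ_row_zero, Finset.sum_eq_single 0]
      · rw [← hsub]
        have hss : (B.updateRow 0 (Pi.single 0 1)).submatrix Fin.succ
            Fin.succ = B.submatrix Fin.succ Fin.succ := by
          ext i j
          simp [Matrix.updateRow_ne (Fin.succ_ne_zero i)]
        simp [Fin.zero_succAbove, hss]
      · intro b _ hb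
        simp [Matrix.updateRow_self, Pi.single_eq_of_ne hb]
      · simp
    have key : (M + Matrix.diagonal (Fin.cons 1 d')).det
        = B.det + (M.submatrix Fin.succ Fin.succ + Matrix.diagonal d').det := by
      have h1 : M + Matrix.diagonal (Fin.cons 1 d')
          = B.updateRow 0 (B 0 + Pi.single 0 1) := by
        ext i j
        refine Fin.cases ?_ (fun i => ?_) i
        · by_cases hj : (0 : Fin (n+1)) = j
          · subst hj
            simp [hB, Matrix.updateRow_self, Matrix.diagonal]
          · simp [hB, Matrix.updateRow_self, Matrix.diagonal_apply, Ne.symm hj,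
              Pi.single_eq_of_ne (Ne.symm hj), hj]
        · simp [hB, Matrix.updateRow_ne (Fin.succ_ne_zero i), Matrix.diagonal_apply,
            Fin.cons_succ]
      rw [h1, Matrix.det_updateRow_add, Matrix.updateRow_eq_self, hminor]
    by_cases h0 : B.det ≠ 0
    · exact ⟨Fin.cons 0 d', fun i => by
        refine Fin.cases ?_ ?_ i
        · exact Or.inl (by simp)
        · intro j; simpa using hd' j, h0⟩
    · push_neg at h0
      refine ⟨Fin.cons 1 d', fun i => by
        refine Fin.cases ?_ ?_ i
        · exact Or.inr (by simp)
        · intro j; simpa using hd' j, ?_⟩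
      rw [key, h0, zero_add]
      exact hdet

theorem partialTau_degree_eq_card
    {V F : Type*} [Fintype V] [DecidableEq V] [Field F]
    (M : Matrix V V F) :
    (∃ A : Finset V, (M + indDiag A).rank = Fintype.card V) ∧
      ∀ A : Finset V, (M + indDiag A).rank ≤ Fintype.card V := by
  classical
  constructor
  · obtain ⟨e⟩ := Fintype.truncEquivFin V
    obtain ⟨d, hd01, hdet⟩ := aux_fin (Fintype.card V) (M.submatrix e.symm e.symm)
    refine ⟨Finset.univ.filter (fun v => d (e v) = 1), ?_⟩
    have hdiag : indDiag (F := F) (Finset.univ.filter (fun v => d (e v) = 1))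
        = Matrix.diagonal (fun v => d (e v)) := by
      unfold indDiag
      have : (fun v => if d (e v) = 1 then (1:F) else 0) = fun v => d (e v) := by
        funext v
        rcases hd01 (e v) with h | h <;> simp [h]
      simp only [Finset.mem_filter, Finset.mem_univ, true_and, this]
    have heq : M + indDiag (Finset.univ.filter (fun v => d (e v) = 1))
        = (M.submatrix e.symm e.symm + Matrix.diagonal d).submatrix e e := by
      rw [hdiag]
      ext i j
      by_cases h : i = j
      · subst h; simp [Matrix.diagonal]
      · have : e i ≠ e j := fun hc => h (e.injective hc)
        simp [Matrix.diagonal, h, this]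
    rw [heq]
    apply Matrix.rank_of_isUnit
    rw [Matrix.isUnit_iff_isUnit_det, Matrix.det_submatrix_equiv_self]
    exact isUnit_iff_ne_zero.mpr hdet
  · intro A
    exact Matrix.rank_le_card_width _
end

section
/- Let M be a square matrix over a field with finite index set V. Then the set of values {rank(M + I_A) : A ⊆ V} is an interval of integers: if m = min and M* = max of this set, then every integer between m and M* is attained by some A ⊆ V. -/
open Matrix Polynomial

-- rank is subadditive
lemma my_rank_add_le {V F : Type*} [Fintype V] [DecidableEq V] [Field F]
    (A B : Matrix V V F) : (A + B).rank ≤ A.rank + B.rank := by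
  classical
  unfold Matrix.rank
  rw [Matrix.mulVecLin_add]
  refine le_trans (Submodule.finrank_mono ?_) (Submodule.finrank_add_le_finrank_add_finrank _ _)
  rintro x ⟨y, rfl⟩
  exact Submodule.mem_sup.2 ⟨A.mulVecLin y, ⟨y, rfl⟩, B.mulVecLin y, ⟨y, rfl⟩, rfl⟩

lemma rank_stdBasisMatrix_le {V F : Type*} [Fintype V] [DecidableEq V] [Field F]
    (v : V) (c : F) : (Matrix.single v v c).rank ≤ 1 := by
  classical
  unfold Matrix.rank
  have h : LinearMap.range (Matrix.single v v c).mulVecLin ≤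
      Submodule.span F {(Pi.single v (1:F) : V → F)} := by
    rintro x ⟨y, rfl⟩
    have : (Matrix.single v v c).mulVec y = (c * y v) • (Pi.single v 1 : V → F) := by
      ext i
      simp [Matrix.mulVec, Matrix.single, dotProduct, Pi.single_apply, ite_and,
        Finset.sum_ite_eq, mul_comm]
      split_ifs with h1 h2 <;> simp_all [eq_comm]
    rw [Matrix.mulVecLin_apply, this]
    exact Submodule.smul_mem _ _ (Submodule.mem_span_singleton_self _)
  refine le_trans (Submodule.finrank_mono h) ?_
  simpa using finrank_span_le_card ({(Pi.single v (1:F) : V → F)} : Set (V → F))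

lemma rank_add_stdBasis_diff {V F : Type*} [Fintype V] [DecidableEq V] [Field F]
    (X : Matrix V V F) (v : V) (c : F) :
    (X + Matrix.single v v c).rank ≤ X.rank + 1 :=
  le_trans (my_rank_add_le _ _) (by gcongr; exact rank_stdBasisMatrix_le v c)

def toggle {V : Type*} [DecidableEq V] (A : Finset V) (v : V) : Finset V :=
  if v ∈ A then A.erase v else insert v A

lemma indDiag_toggle {V F : Type*} [Fintype V] [DecidableEq V] [Field F]
    (A : Finset V) (v : V) :
    ∃ c : F, indDiag (toggle A v) = indDiag A + Matrix.single v v c := by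
  by_cases h : v ∈ A
  · refine ⟨-1, ?_⟩
    ext i j
    by_cases hij : i = j <;> by_cases hiv : i = v <;>
      simp_all [indDiag, toggle, Matrix.diagonal, Matrix.single, Ne.symm]
  · refine ⟨1, ?_⟩
    ext i j
    by_cases hij : i = j <;> by_cases hiv : i = v <;>
      simp_all [indDiag, toggle, Matrix.diagonal, Matrix.single, Ne.symm]

lemma toggle_rank_bound {V F : Type*} [Fintype V] [DecidableEq V] [Field F]
    (M : Matrix V V F) (A : Finset V) (v : V) :
    (M + indDiag (toggle A v)).rank ≤ (M + indDiag A).rank + 1 ∧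
    (M + indDiag A).rank ≤ (M + indDiag (toggle A v)).rank + 1 := by
  obtain ⟨c, hc⟩ := indDiag_toggle (F := F) A v
  constructor
  · rw [hc, ← add_assoc]
    exact rank_add_stdBasis_diff _ v c
  · have : M + indDiag A = (M + indDiag (toggle A v)) + Matrix.single v v (-c) := by
      rw [hc]; ext i j
      simp only [Matrix.add_apply, Matrix.single, Matrix.of_apply]
      split <;> ring
    rw [this]
    exact rank_add_stdBasis_diff _ v (-c)

lemma toggle_symmDiff {V : Type*} [DecidableEq V] (A B : Finset V) (v : V)
    (hv : v ∈ symmDiff A B) : symmDiff (toggle A v) B = (symmDiff A B).erase v := by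
  ext x
  by_cases hx : x = v <;> by_cases hA : v ∈ A <;>
    simp_all [toggle, Finset.mem_symmDiff] <;> tauto

lemma key_interval {V F : Type*} [Fintype V] [DecidableEq V] [Field F]
    (M : Matrix V V F) (k : ℕ) :
    ∀ n (A B : Finset V), (symmDiff A B).card = n →
      (M + indDiag A).rank ≤ k → k ≤ (M + indDiag B).rank →
      ∃ C : Finset V, (M + indDiag C).rank = k := by
  intro n
  induction n using Nat.strong_induction_on with
  | _ n ih =>
    intro A B hn hA hB
    match n, hn with
    | 0, hn =>
      have : A = B := by rwa [Finset.card_eq_zero, ← Finset.bot_eq_empty, symmDiff_eq_bot] at hn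
      exact ⟨A, le_antisymm hA (this ▸ hB)⟩
    | n+1, hn =>
      have hne : (symmDiff A B).Nonempty := by rw [← Finset.card_pos, hn]; omega
      obtain ⟨v, hv⟩ := hne
      have hcard : (symmDiff (toggle A v) B).card = n := by
        rw [toggle_symmDiff A B v hv, Finset.card_erase_of_mem hv, hn]; omega
      obtain ⟨h1, h2⟩ := toggle_rank_bound M A v
      by_cases hk : (M + indDiag (toggle A v)).rank ≤ k
      · exact ih n (Nat.lt_succ_self n) (toggle A v) B hcard hk hB
      · exact ⟨A, by omega⟩

theorem partialTau_ranks_interval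
    {V F : Type*} [Fintype V] [DecidableEq V] [Field F]
    (M : Matrix V V F) (k : ℕ)
    (h₀ : ∃ A : Finset V, (M + indDiag A).rank ≤ k)
    (h₁ : ∃ A : Finset V, k ≤ (M + indDiag A).rank) :
    ∃ A : Finset V, (M + indDiag A).rank = k := by
  obtain ⟨A, hA⟩ := h₀
  obtain ⟨B, hB⟩ := h₁
  exact key_interval M k _ A B rfl hA hB
end

section
/- Let n be an even positive integer and let M be the adjacency matrix of the complete graph K_n over GF(2) (all off-diagonal entries 1, diagonal 0). Then the partial-⟨τδτ⟩ polynomial P_{τδτ}(M,z) = Σ_{A ⊆ {1,…,n}} z^{rank(M) − corank((M+I_A)[A])} equals z(1+z)^n + z^n − z^{n+1}. -/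
open Matrix Polynomial

/-- The all-ones matrix over a nonempty index type has rank 1. -/
lemma rank_allOnes {ι F : Type*} [Fintype ι] [Nonempty ι] [Field F] :
    (Matrix.of (fun _ _ : ι => (1 : F))).rank = 1 := by
  rw [Matrix.rank_eq_finrank_span_cols]
  have hr : Set.range (Matrix.of (fun _ _ : ι => (1 : F)))ᵀ = {fun _ => (1 : F)} := by
    ext v
    constructor
    · rintro ⟨j, rfl⟩; rfl
    · rintro rfl; exact ⟨Classical.arbitrary ι, rfl⟩
  rw [show Set.range (Matrix.of (fun _ _ : ι => (1 : F))).col = {fun _ => (1 : F)} from hr]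
  exact finrank_span_singleton (by
    intro h
    have := congrFun h (Classical.arbitrary ι)
    simp at this)

lemma rank_completeGraph_even (n : ℕ) (heven : Even n)
    (M : Matrix (Fin n) (Fin n) (ZMod 2))
    (hM : ∀ i j, M i j = if i = j then 0 else 1) : M.rank = n := by
  set J : Matrix (Fin n) (Fin n) (ZMod 2) := Matrix.of (fun _ _ => 1) with hJ
  have hMJ : M = 1 + J := by
    ext i j
    rw [hM]
    by_cases h : i = j <;> simp [h, J, Matrix.one_apply] <;> decide
  have hJJ : J * J = 0 := by
    ext i j
    simp [Matrix.mul_apply, J]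
    rw [(ZMod.natCast_eq_zero_iff n 2).2 heven.two_dvd]
  have hJ2 : J + J = 0 := by
    ext i j; simp [J]; decide
  have hMM : M * M = 1 := by
    rw [hMJ]
    have e : (1 + J) * (1 + J) = 1 + (J + J) + J * J := by noncomm_ring
    rw [e, hJJ, hJ2, add_zero, add_zero]
  have : IsUnit M := (Matrix.isUnit_iff_isUnit_det M).2
    (IsUnit.of_mul_eq_one (M.det) (by rw [← Matrix.det_mul, hMM, Matrix.det_one]))
  rw [Matrix.rank_of_isUnit M this, Fintype.card_fin]

theorem partialTauDeltaTau_completeGraph_even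
    (n : ℕ) (hn : 0 < n) (heven : Even n)
    (M : Matrix (Fin n) (Fin n) (ZMod 2))
    (hM : ∀ i j, M i j = if i = j then 0 else 1) :
    (∑ A : Finset (Fin n), (X : Polynomial ℤ) ^
        (M.rank - (A.card - (psub (M + indDiag A) A).rank))) =
      X * (1 + X) ^ n + X ^ n - X ^ (n + 1) := by
  have hrank : M.rank = n := rank_completeGraph_even n heven M hM
  -- rank of the principal submatrix on a nonempty A is 1
  have hsub : ∀ A : Finset (Fin n), A ≠ ∅ → (psub (M + indDiag A) A).rank = 1 := by
    intro A hA
    have : Nonempty A := Finset.Nonempty.to_subtype (Finset.nonempty_iff_ne_empty.2 hA)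
    have he : psub (M + indDiag A) A = Matrix.of (fun _ _ : A => (1 : ZMod 2)) := by
      ext i j
      simp only [psub, indDiag, Matrix.submatrix_apply, Matrix.add_apply, Matrix.of_apply]
      rw [hM]
      by_cases h : (i : Fin n) = (j : Fin n)
      · simp [h, Matrix.diagonal_apply, j.2]
      · simp [h, Matrix.diagonal_apply]
    rw [he, rank_allOnes]
  -- rewrite each summand
  have hstep : (∑ A : Finset (Fin n), (X : Polynomial ℤ) ^
        (M.rank - (A.card - (psub (M + indDiag A) A).rank))) =
      ∑ A : Finset (Fin n), (X : Polynomial ℤ) ^ (n - (A.card - 1)) := by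
    refine Finset.sum_congr rfl fun A _ => ?_
    rw [hrank]
    by_cases hA : A = ∅
    · subst hA
      simp
    · rw [hsub A hA]
  rw [hstep]
  -- binomial identity
  have hbin : ∑ A : Finset (Fin n), (X : Polynomial ℤ) ^ (n + 1 - A.card)
      = X * (1 + X) ^ n := by
    have hp := Finset.prod_add (fun _ : Fin n => (1 : Polynomial ℤ)) (fun _ => (X : Polynomial ℤ))
      Finset.univ
    simp only [Finset.prod_const, one_pow, one_mul, Finset.card_sdiff_of_subset (Finset.subset_univ _),
      Finset.card_univ, Fintype.card_fin, Finset.powerset_univ] at hp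
    rw [hp, Finset.mul_sum]
    refine Finset.sum_congr rfl fun A _ => ?_
    have h2 : A.card ≤ n := by
      have := Finset.card_le_univ A
      simpa using this
    have : n + 1 - A.card = (n - A.card) + 1 := by omega
    rw [this, pow_succ, mul_comm]
  -- split off the empty set
  have h0 : (∅ : Finset (Fin n)) ∈ (Finset.univ : Finset (Finset (Fin n))) := Finset.mem_univ _
  have hS := (Finset.add_sum_erase Finset.univ
    (fun A : Finset (Fin n) => (X : Polynomial ℤ) ^ (n - (A.card - 1))) h0).symm
  have hT := (Finset.add_sum_erase Finset.univ
    (fun A : Finset (Fin n) => (X : Polynomial ℤ) ^ (n + 1 - A.card)) h0).symm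
  have heq : (∑ A ∈ Finset.univ.erase (∅ : Finset (Fin n)),
        (X : Polynomial ℤ) ^ (n - (A.card - 1))) =
      ∑ A ∈ Finset.univ.erase (∅ : Finset (Fin n)), (X : Polynomial ℤ) ^ (n + 1 - A.card) := by
    refine Finset.sum_congr rfl fun A hA => ?_
    have hne : A ≠ ∅ := (Finset.mem_erase.1 hA).1
    have h1 : 1 ≤ A.card := Finset.card_pos.2 (Finset.nonempty_iff_ne_empty.2 hne)
    have h2 : A.card ≤ n := by
      have := Finset.card_le_univ A
      simpa using this
    congr 1
    omega
  rw [hS, heq, ← hbin, hT]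
  simp only [Finset.card_empty, Nat.sub_zero, Nat.zero_sub]
  ring
end

section
/- Let M be a square matrix over GF(2) indexed by a finite set V and let v ∈ V be an isolated index, meaning M_{uv}=M_{vu}=0 for all u ≠ v. Let M' = M[V∖{v}]. Then the partial-⟨δ⟩ polynomial satisfies P_δ(M,z) = 2·z^{M_{vv}}·P_δ(M',z), where P_δ(N,z) = Σ_{A} z^{rank(N[A])+rank(N[A^c])}. -/
open Matrix Polynomial

section AuxLinear

variable {K : Type*} [Field K]

lemma aux_range_prodMap {M₁ M₂ M₃ M₄ : Type*} [AddCommGroup M₁] [AddCommGroup M₂]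
    [AddCommGroup M₃] [AddCommGroup M₄] [Module K M₁] [Module K M₂] [Module K M₃] [Module K M₄]
    (f : M₁ →ₗ[K] M₂) (g : M₃ →ₗ[K] M₄) :
    LinearMap.range (f.prodMap g) = (LinearMap.range f).prod (LinearMap.range g) := by
  ext x
  constructor
  · rintro ⟨⟨a, b⟩, rfl⟩
    exact ⟨⟨a, rfl⟩, ⟨b, rfl⟩⟩
  · rintro ⟨⟨a, ha⟩, ⟨b, hb⟩⟩
    exact ⟨(a, b), Prod.ext ha hb⟩

/-- The submodule `p.prod q` is linearly equivalent to `p × q`. -/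
noncomputable def prodSubEquiv {M₁ M₂ : Type*} [AddCommGroup M₁] [AddCommGroup M₂]
    [Module K M₁] [Module K M₂] (p : Submodule K M₁) (q : Submodule K M₂) :
    ↥(p.prod q) ≃ₗ[K] ↥p × ↥q where
  toFun x := (⟨x.1.1, (Submodule.mem_prod.mp x.2).1⟩, ⟨x.1.2, (Submodule.mem_prod.mp x.2).2⟩)
  invFun y := ⟨(y.1.1, y.2.1), Submodule.mem_prod.mpr ⟨y.1.2, y.2.2⟩⟩
  left_inv x := rfl
  right_inv y := rfl
  map_add' x y := rfl
  map_smul' c x := rfl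

lemma aux_finrank_prod {M₁ M₂ : Type*} [AddCommGroup M₁] [AddCommGroup M₂]
    [Module K M₁] [Module K M₂] [FiniteDimensional K M₁] [FiniteDimensional K M₂]
    (p : Submodule K M₁) (q : Submodule K M₂) :
    Module.finrank K ↥(p.prod q) = Module.finrank K ↥p + Module.finrank K ↥q := by
  rw [LinearEquiv.finrank_eq (prodSubEquiv p q), Module.finrank_prod]

lemma rank_fromBlocks_zero {m n : Type*} [Fintype m] [Fintype n] [DecidableEq m] [DecidableEq n]
    (A : Matrix m m K) (D : Matrix n n K) :
    (Matrix.fromBlocks A 0 0 D).rank = A.rank + D.rank := by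
  classical
  set e := LinearEquiv.sumArrowLequivProdArrow m n K K with he
  have hml : (Matrix.fromBlocks A 0 0 D).mulVecLin
      = e.symm.toLinearMap ∘ₗ ((A.mulVecLin.prodMap D.mulVecLin) ∘ₗ e.toLinearMap) := by
    apply LinearMap.ext
    intro x
    have hx : Matrix.fromBlocks A 0 0 D *ᵥ x
        = Sum.elim (A *ᵥ (x ∘ Sum.inl)) (D *ᵥ (x ∘ Sum.inr)) := by
      conv_lhs => rw [← Sum.elim_comp_inl_inr x]
      rw [Matrix.fromBlocks_mulVec]
      simp
    simp only [Matrix.mulVecLin_apply, hx, LinearMap.comp_apply, LinearEquiv.coe_coe]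
    rfl
  rw [Matrix.rank, hml, LinearMap.range_comp, LinearMap.range_comp,
    LinearEquiv.range, Submodule.map_top]
  rw [LinearEquiv.finrank_map_eq, aux_range_prodMap, aux_finrank_prod]
  rfl

lemma rank_one_by_one (c : ZMod 2) :
    (Matrix.of (fun _ _ : Unit => c)).rank = c.val := by
  by_cases hc : c = 0
  · subst hc
    have : (Matrix.of (fun _ _ : Unit => (0 : ZMod 2))) = 0 := rfl
    rw [this, Matrix.rank_zero]
    rfl
  · have hc1 : c = 1 := by
      fin_cases c
      · exact absurd rfl hc
      · rfl
    subst hc1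
    have : (Matrix.of (fun _ _ : Unit => (1 : ZMod 2))) = (1 : Matrix Unit Unit (ZMod 2)) := by
      ext i j
      simp [Matrix.one_apply, Subsingleton.elim i j]
    rw [this, Matrix.rank_one]
    rfl

end AuxLinear

section Main

variable {V : Type*} [Fintype V] [DecidableEq V]

/-- Lift a finset of the subtype `{u // u ≠ v}` to a finset of `V`. -/
def liftF (v : V) (B : Finset {u : V // u ≠ v}) : Finset V :=
  B.map (Function.Embedding.subtype _)

lemma mem_liftF_ne {v : V} {B : Finset {u : V // u ≠ v}} {x : V} (hx : x ∈ liftF v B) :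
    x ≠ v := by
  simp only [liftF, Finset.mem_map, Function.Embedding.coe_subtype] at hx
  obtain ⟨a, _, rfl⟩ := hx
  exact a.2

lemma mem_liftF_mem {v : V} {B : Finset {u : V // u ≠ v}} {x : V} (hx : x ∈ liftF v B)
    (h : x ≠ v) : (⟨x, h⟩ : {u : V // u ≠ v}) ∈ B := by
  simp only [liftF, Finset.mem_map, Function.Embedding.coe_subtype] at hx
  obtain ⟨a, ha, rfl⟩ := hx
  exact ha

lemma mem_liftF_iff {v : V} {B : Finset {u : V // u ≠ v}} {x : {u : V // u ≠ v}} :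
    (x : V) ∈ liftF v B ↔ x ∈ B := by
  simp only [liftF, Finset.mem_map, Function.Embedding.coe_subtype]
  constructor
  · rintro ⟨a, ha, h⟩
    rwa [← Subtype.ext h]
  · intro h
    exact ⟨x, h, rfl⟩

lemma not_mem_liftF {v : V} (B : Finset {u : V // u ≠ v}) : v ∉ liftF v B :=
  fun h => mem_liftF_ne h rfl

/-- The equivalence between `B` and its lift. -/
def liftEquiv (v : V) (B : Finset {u : V // u ≠ v}) : ↥B ≃ ↥(liftF v B) where
  toFun a := ⟨a.1.1, mem_liftF_iff.mpr a.2⟩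
  invFun x := ⟨⟨x.1, mem_liftF_ne x.2⟩, mem_liftF_mem x.2 _⟩
  left_inv a := by ext; rfl
  right_inv x := rfl

/-- The equivalence between `Unit ⊕ B` and `insert v (liftF v B)`. -/
def insEquiv (v : V) (B : Finset {u : V // u ≠ v}) :
    Unit ⊕ ↥B ≃ ↥(insert v (liftF v B)) where
  toFun x := x.elim (fun _ => ⟨v, Finset.mem_insert_self v _⟩)
    (fun b => ⟨b.1.1, Finset.mem_insert_of_mem (mem_liftF_iff.mpr b.2)⟩)
  invFun x :=
    if h : (x : V) = v then Sum.inl ()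
    else Sum.inr ⟨⟨x.1, h⟩, mem_liftF_mem ((Finset.mem_insert.mp x.2).resolve_left h) h⟩
  left_inv x := by
    rcases x with _ | b
    · simp
    · have hb : (b.1.1 : V) ≠ v := b.1.2
      simp only [Sum.elim_inr, hb, dif_neg, not_false_iff]
      exact dif_neg hb
  right_inv x := by
    by_cases h : (x : V) = v
    · simp only [dif_pos h]
      exact Subtype.ext h.symm
    · simp only [dif_neg h]
      exact Subtype.ext rfl

variable (M : Matrix V V (ZMod 2)) (v : V)

/-- Abbreviation for the matrix with row and column `v` deleted. -/
private def Mdel : Matrix {u : V // u ≠ v} {u : V // u ≠ v} (ZMod 2) :=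
  M.submatrix (fun a : {u : V // u ≠ v} => a.1) (fun a => a.1)

lemma rank_psub_lift (B : Finset {u : V // u ≠ v}) :
    (psub M (liftF v B)).rank = (psub (Mdel M v) B).rank := by
  have h : psub M (liftF v B)
      = (psub (Mdel M v) B).submatrix ⇑(liftEquiv v B).symm ⇑(liftEquiv v B).symm := rfl
  rw [h, Matrix.rank_submatrix]

lemma rank_psub_insert (hv : ∀ u : V, u ≠ v → M u v = 0 ∧ M v u = 0)
    (B : Finset {u : V // u ≠ v}) :
    (psub M (insert v (liftF v B))).rank = (M v v).val + (psub (Mdel M v) B).rank := by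
  have key : (psub M (insert v (liftF v B))).submatrix ⇑(insEquiv v B) ⇑(insEquiv v B)
      = Matrix.fromBlocks (Matrix.of (fun _ _ : Unit => M v v)) 0 0 (psub (Mdel M v) B) := by
    ext i j
    rcases i with _ | b <;> rcases j with _ | b'
    · rfl
    · exact (hv b'.1.1 b'.1.2).2
    · exact (hv b.1.1 b.1.2).1
    · rfl
  have h1 : (psub M (insert v (liftF v B))).rank
      = ((psub M (insert v (liftF v B))).submatrix ⇑(insEquiv v B) ⇑(insEquiv v B)).rank :=
    (Matrix.rank_submatrix _ _ _).symm
  rw [h1, key, rank_fromBlocks_zero, rank_one_by_one]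

lemma compl_lift (B : Finset {u : V // u ≠ v}) :
    Finset.univ \ (liftF v B) = insert v (liftF v (Finset.univ \ B)) := by
  ext u
  by_cases h : u = v
  · subst h
    simp [not_mem_liftF]
  · simp only [Finset.mem_sdiff, Finset.mem_univ, true_and, Finset.mem_insert, h, false_or]
    rw [show u = ((⟨u, h⟩ : {u : V // u ≠ v}) : V) from rfl, mem_liftF_iff, mem_liftF_iff]
    simp

lemma compl_insert (B : Finset {u : V // u ≠ v}) :
    Finset.univ \ (insert v (liftF v B)) = liftF v (Finset.univ \ B) := by
  ext u
  by_cases h : u = v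
  · subst h
    simp [not_mem_liftF]
  · simp only [Finset.mem_sdiff, Finset.mem_univ, true_and, Finset.mem_insert, h, false_or]
    rw [show u = ((⟨u, h⟩ : {u : V // u ≠ v}) : V) from rfl, mem_liftF_iff, mem_liftF_iff]
    simp

lemma liftF_subtype {A : Finset V} (hA : v ∉ A) : liftF v (A.subtype (· ≠ v)) = A := by
  ext u
  by_cases h : u = v
  · subst h
    simp [not_mem_liftF, hA]
  · rw [show u = ((⟨u, h⟩ : {u : V // u ≠ v}) : V) from rfl, mem_liftF_iff]
    simp [Finset.mem_subtype]

lemma insert_liftF_subtype {A : Finset V} (hA : v ∈ A) :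
    insert v (liftF v (A.subtype (· ≠ v))) = A := by
  ext u
  by_cases h : u = v
  · subst h
    simp [hA]
  · simp only [Finset.mem_insert, h, false_or]
    rw [show u = ((⟨u, h⟩ : {u : V // u ≠ v}) : V) from rfl, mem_liftF_iff]
    simp [Finset.mem_subtype]

lemma subtype_liftF (B : Finset {u : V // u ≠ v}) :
    (liftF v B).subtype (· ≠ v) = B := by
  ext b
  rw [Finset.mem_subtype]
  exact mem_liftF_iff

lemma subtype_insert_liftF (B : Finset {u : V // u ≠ v}) :
    (insert v (liftF v B)).subtype (· ≠ v) = B := by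
  ext b
  have hb : (b : V) ≠ v := b.2
  rw [Finset.mem_subtype, Finset.mem_insert]
  simp only [hb, false_or]
  exact mem_liftF_iff

end Main

theorem partialDelta_isolated_vertex
    {V : Type*} [Fintype V] [DecidableEq V]
    (M : Matrix V V (ZMod 2)) (v : V) (hv : ∀ u : V, u ≠ v → M u v = 0 ∧ M v u = 0) :
    (∑ A : Finset V, (X : Polynomial ℤ) ^
        ((psub M A).rank + (psub M (Finset.univ \ A)).rank)) =
      2 * (X : Polynomial ℤ) ^ (M v v).val *
        ∑ A : Finset {u : V // u ≠ v},
          ((X : Polynomial ℤ) ^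
            ((psub (M.submatrix (fun a : {u : V // u ≠ v} => a.1) (fun a => a.1)) A).rank +
             (psub (M.submatrix (fun a : {u : V // u ≠ v} => a.1) (fun a => a.1))
               (Finset.univ \ A)).rank)) := by
  classical
  have main : (∑ A : Finset V, (X : Polynomial ℤ) ^
        ((psub M A).rank + (psub M (Finset.univ \ A)).rank)) =
      2 * (X : Polynomial ℤ) ^ (M v v).val *
        ∑ B : Finset {u : V // u ≠ v},
          ((X : Polynomial ℤ) ^
            ((psub (Mdel M v) B).rank + (psub (Mdel M v) (Finset.univ \ B)).rank)) := by
    have split := Finset.sum_filter_add_sum_filter_not (Finset.univ : Finset (Finset V))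
      (fun A => v ∈ A) (fun A => (X : Polynomial ℤ) ^
        ((psub M A).rank + (psub M (Finset.univ \ A)).rank))
    have h1 : ∑ A ∈ Finset.univ.filter (fun A => v ∈ A),
          ((X : Polynomial ℤ) ^ ((psub M A).rank + (psub M (Finset.univ \ A)).rank))
        = ∑ B : Finset {u : V // u ≠ v}, (X : Polynomial ℤ) ^ (M v v).val *
            ((X : Polynomial ℤ) ^
              ((psub (Mdel M v) B).rank + (psub (Mdel M v) (Finset.univ \ B)).rank)) := by
      refine Finset.sum_nbij' (fun A => A.subtype (· ≠ v))
        (fun B => insert v (liftF v B)) ?_ ?_ ?_ ?_ ?_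
      · intro A _; exact Finset.mem_univ _
      · intro B _; simp
      · intro A hA
        simp only [Finset.mem_filter] at hA
        exact insert_liftF_subtype v hA.2
      · intro B _
        exact subtype_insert_liftF v B
      · intro A hA
        simp only [Finset.mem_filter] at hA
        conv_lhs => rw [(insert_liftF_subtype v hA.2).symm]
        rw [rank_psub_insert M v hv, compl_insert, rank_psub_lift]
        rw [pow_add, pow_add, pow_add]
        ring
    have h2 : ∑ A ∈ Finset.univ.filter (fun A => ¬ v ∈ A),
          ((X : Polynomial ℤ) ^ ((psub M A).rank + (psub M (Finset.univ \ A)).rank))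
        = ∑ B : Finset {u : V // u ≠ v}, (X : Polynomial ℤ) ^ (M v v).val *
            ((X : Polynomial ℤ) ^
              ((psub (Mdel M v) B).rank + (psub (Mdel M v) (Finset.univ \ B)).rank)) := by
      refine Finset.sum_nbij' (fun A => A.subtype (· ≠ v))
        (fun B => liftF v B) ?_ ?_ ?_ ?_ ?_
      · intro A _; exact Finset.mem_univ _
      · intro B _; simp [not_mem_liftF]
      · intro A hA
        simp only [Finset.mem_filter] at hA
        exact liftF_subtype v hA.2
      · intro B _
        exact subtype_liftF v B
      · intro A hA
        simp only [Finset.mem_filter] at hA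
        conv_lhs => rw [(liftF_subtype v hA.2).symm]
        rw [rank_psub_lift, compl_lift, rank_psub_insert M v hv]
        rw [pow_add, pow_add, pow_add]
        ring
    rw [← split, h1, h2, ← Finset.mul_sum]
    ring
  exact main
end
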